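/- arXiv:0812.2026 — 9 statements merged into one kernel-verified Lean document; each statement's English description precedes it below -/
import Mathlib

section
/- Let L be a co-Heyting algebra and a, b ∈ L. Then mF(a \ b) = { p ∈ mF(a) | b ∉ p } and mF(a \ b) = mF(a) ∩ F(a \ b), where F(x) denotes the set of prime filters of L containing x and mF(x) denotes the set of elements of F(x) that are minimal with respect to inclusion among prime filters containing x. -/
/-- A prime filter of a bounded lattice: upward closed, closed under `⊓`,
contains `⊤`, does not contain `⊥`, and prime with respect to `⊔`. -/
def IsPrimeFilter {L : Type*} [Lattice L] [BoundedOrder L] (p : Set L) : Prop :=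
  (∀ x ∈ p, ∀ y : L, x ≤ y → y ∈ p) ∧
  (∀ x ∈ p, ∀ y ∈ p, x ⊓ y ∈ p) ∧
  (⊤ : L) ∈ p ∧ (⊥ : L) ∉ p ∧
  ∀ x y : L, x ⊔ y ∈ p → x ∈ p ∨ y ∈ p

/-- `dim a ≥ n`: there is a strictly increasing chain `p 0 ⊊ p 1 ⊊ ⋯ ⊊ p n`
of prime filters with `a ∈ p 0`. -/
def DimGE {L : Type*} [Lattice L] [BoundedOrder L] (a : L) (n : ℕ) : Prop :=
  ∃ p : Fin (n + 1) → Set L, (∀ i, IsPrimeFilter (p i)) ∧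
    (∀ i j : Fin (n + 1), i < j → p i ⊂ p j) ∧ a ∈ p 0

/-- `codim a ≥ n`: every prime filter `p` containing `a` admits a strictly
increasing chain `q n ⊊ ⋯ ⊊ q 1 ⊊ q 0 = p` of prime filters. -/
def CodimGE {L : Type*} [Lattice L] [BoundedOrder L] (a : L) (n : ℕ) : Prop :=
  ∀ p : Set L, IsPrimeFilter p → a ∈ p →
    ∃ q : Fin (n + 1) → Set L, (∀ i, IsPrimeFilter (q i)) ∧
      (∀ i j : Fin (n + 1), i < j → q j ⊂ q i) ∧ q 0 = p

/-- The strong order: `b ≪ a` iff for every `c`, `a ≤ b ⊔ c` implies `a ≤ c`. -/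
def StrongBelow {L : Type*} [Lattice L] (b a : L) : Prop :=
  ∀ c : L, a ≤ b ⊔ c → a ≤ c

/-- `F a` is the set of prime filters containing `a`. -/
def primeF {L : Type*} [Lattice L] [BoundedOrder L] (a : L) : Set (Set L) :=
  {p | IsPrimeFilter p ∧ a ∈ p}

/-- `mF a` is the set of minimal elements of `F a` with respect to inclusion. -/
def minPrimeF {L : Type*} [Lattice L] [BoundedOrder L] (a : L) : Set (Set L) :=
  {p ∈ primeF a | ∀ q ∈ primeF a, q ⊆ p → q = p}

/-- Key lemma: if `p` is a minimal prime filter over `x` and `y ∈ p`, then there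
is `z ∉ p` with `x ≤ y ⊔ z`. -/
lemma minPrimeF_key {L : Type*} [CoheytingAlgebra L] {x : L} {p : Set L}
    (hp : p ∈ minPrimeF x) {y : L} (hy : y ∈ p) : ∃ z, z ∉ p ∧ x ≤ y ⊔ z := by
  by_contra h
  push_neg at h
  obtain ⟨⟨hpf, hxp⟩, hmin⟩ := hp
  obtain ⟨hup, hinf, htop, hbot, hprime⟩ := hpf
  -- the ideal generated by `y` and the complement of `p`
  set I : Set L := {w | ∃ c, c ∉ p ∧ w ≤ y ⊔ c} with hI
  have hIideal : Order.IsIdeal I := by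
    refine ⟨fun a b hba ⟨c, hc, hle⟩ => ⟨c, hc, le_trans hba hle⟩,
      ⟨⊥, ⊥, hbot, bot_le⟩, ?_⟩
    rintro w₁ ⟨c₁, hc₁, h₁⟩ w₂ ⟨c₂, hc₂, h₂⟩
    refine ⟨w₁ ⊔ w₂, ⟨c₁ ⊔ c₂, fun hm => ?_, ?_⟩, le_sup_left, le_sup_right⟩
    · rcases hprime _ _ hm with h | h
      · exact hc₁ h
      · exact hc₂ h
    · exact sup_le (h₁.trans (sup_le_sup_left le_sup_left y))
        (h₂.trans (sup_le_sup_left le_sup_right y))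
  set F : Order.PFilter L := Order.PFilter.principal x
  have hdisj : Disjoint (F : Set L) I := by
    rw [Set.disjoint_left]
    rintro w hwF ⟨c, hc, hle⟩
    exact h c hc (le_trans hwF hle)
  obtain ⟨J, hJprime, hIJ, hFJ⟩ :=
    DistribLattice.prime_ideal_of_disjoint_filter_ideal (I := hIideal.toIdeal) hdisj
  have hxF : x ∈ (F : Set L) := le_refl x
  have hxJ : x ∉ (J : Set L) := Set.disjoint_left.mp hFJ hxF
  set q : Set L := (J : Set L)ᶜ with hq
  have hqpf : IsPrimeFilter q := by
    refine ⟨fun a ha b hab hb => ha (J.lower hab hb),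
      fun a ha b hb hab => (hJprime.mem_or_mem hab).elim ha hb,
      fun ht => hxJ (J.lower le_top ht),
      fun hb => hb J.bot_mem,
      fun a b hab => ?_⟩
    by_contra hc
    push_neg at hc
    simp only [hq, Set.mem_compl_iff, not_not] at hc hab
    exact hab (Order.Ideal.sup_mem hc.1 hc.2)
  have hqsub : q ⊆ p := by
    intro w hw
    by_contra hwp
    exact hw (hIJ ⟨w, hwp, le_sup_right⟩)
  have hqeq : q = p := hmin q ⟨hqpf, hxJ⟩ hqsub
  have hyI : y ∈ I := ⟨⊥, hbot, le_sup_left⟩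
  exact (hqeq ▸ hy) (hIJ hyI)

theorem stmt4 {L : Type*} [CoheytingAlgebra L] (a b : L) :
    minPrimeF (a \ b) = {p ∈ minPrimeF a | b ∉ p} ∧
    minPrimeF (a \ b) = minPrimeF a ∩ primeF (a \ b) := by
  have sdiff_le' : a \ b ≤ a := sdiff_le
  -- membership of a\b from a ∈ p and b ∉ p
  have mem_sdiff : ∀ p : Set L, IsPrimeFilter p → a ∈ p → b ∉ p → a \ b ∈ p := by
    intro p hpf hap hbp
    have : b ⊔ a \ b ∈ p := hpf.1 a hap _ le_sup_sdiff
    rcases hpf.2.2.2.2 _ _ this with h | h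
    · exact absurd h hbp
    · exact h
  -- a minimal prime over a\b is in mF(a) and avoids b
  have forward : ∀ p ∈ minPrimeF (a \ b), p ∈ minPrimeF a ∧ b ∉ p := by
    intro p hp
    have hpf := hp.1.1
    have hap : a ∈ p := hpf.1 _ hp.1.2 _ sdiff_le'
    have hbp : b ∉ p := by
      intro hb
      obtain ⟨z, hz, hle⟩ := minPrimeF_key hp hb
      have h2 : (a \ b) \ b ≤ z := sdiff_le_iff.mpr hle
      rw [sdiff_sdiff, sup_idem] at h2
      exact hz (hpf.1 _ hp.1.2 _ h2)
    refine ⟨⟨⟨hpf, hap⟩, ?_⟩, hbp⟩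
    intro q hq hsub
    have hbq : b ∉ q := fun hb => hbp (hsub hb)
    have : a \ b ∈ q := mem_sdiff q hq.1 hq.2 hbq
    exact hp.2 q ⟨hq.1, this⟩ hsub
  -- a minimal prime over a avoiding b is a minimal prime over a\b
  have backward : ∀ p ∈ minPrimeF a, b ∉ p → p ∈ minPrimeF (a \ b) := by
    intro p hp hbp
    have hpf := hp.1.1
    have hsd : a \ b ∈ p := mem_sdiff p hpf hp.1.2 hbp
    refine ⟨⟨hpf, hsd⟩, ?_⟩
    intro q hq hsub
    have haq : a ∈ q := hq.1.1 _ hq.2 _ sdiff_le'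
    exact hp.2 q ⟨hq.1, haq⟩ hsub
  have h1 : minPrimeF (a \ b) = {p ∈ minPrimeF a | b ∉ p} := by
    ext p
    constructor
    · exact fun hp => forward p hp
    · exact fun ⟨hp, hbp⟩ => backward p hp hbp
  refine ⟨h1, ?_⟩
  ext p
  constructor
  · exact fun hp => ⟨(forward p hp).1, hp.1⟩
  · rintro ⟨hp, hpF⟩
    have hbp : b ∉ p := by
      intro hb
      obtain ⟨z, hz, hle⟩ := minPrimeF_key hp hb
      have : a \ b ≤ z := sdiff_le_iff.mpr hle
      exact hz (hp.1.1.1 _ hpF.2 _ this)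
    exact backward p hp hbp
end

section
/- Let L be a co-Heyting algebra, p a prime filter of L and n a natural number. If there exists a strictly increasing chain p_n ⊊ p_{n-1} ⊊ ⋯ ⊊ p_0 = p of prime filters of L, then p contains an element b with codim b ≥ n. -/
open Order

lemma key {L : Type*} [CoheytingAlgebra L] {r : Set L} (hr : IsPrimeFilter r)
    {B u : L} (h1 : B \ u ∈ r) (h2 : u ∈ r) :
    ∃ r' : Set L, IsPrimeFilter r' ∧ r' ⊂ r ∧ B ∈ r' := by
  obtain ⟨rup, rinf, rtop, rbot, rprime⟩ := hr
  set I : Set L := {x | ∃ j ∉ r, x ≤ u ⊔ j} with hI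
  have hIlow : IsLowerSet I := by
    rintro x y hxy ⟨j, hj, hx⟩
    exact ⟨j, hj, hxy.trans hx⟩
  have hIdeal : IsIdeal I := by
    refine ⟨hIlow, ⟨u, ⊥, rbot, le_sup_left⟩, ?_⟩
    rintro x ⟨j1, hj1, hx⟩ y ⟨j2, hj2, hy⟩
    refine ⟨x ⊔ y, ⟨j1 ⊔ j2, fun h => ?_, sup_le (hx.trans ?_) (hy.trans ?_)⟩,
      le_sup_left, le_sup_right⟩
    · rcases rprime _ _ h with h | h
      · exact hj1 h
      · exact hj2 h
    · exact sup_le_sup_left le_sup_left u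
    · exact sup_le_sup_left le_sup_right u
  have hBI : B ∉ I := by
    rintro ⟨j, hj, hB⟩
    exact hj (rup _ h1 j (sdiff_le_iff.mpr hB))
  have hdisj : Disjoint ((PFilter.principal B : PFilter L) : Set L) (hIdeal.toIdeal : Set L) := by
    rw [Set.disjoint_left]
    intro x hx hxI
    exact hBI (hIlow (PFilter.mem_principal.mp hx) hxI)
  obtain ⟨J, hJprime, hIJ, hJdisj⟩ :=
    DistribLattice.prime_ideal_of_disjoint_filter_ideal hdisj
  have hcomplI : ∀ j : L, j ∉ r → j ∈ I := fun j hj => ⟨j, hj, le_sup_right⟩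
  have hBJ : B ∉ (J : Set L) := fun h =>
    Set.disjoint_left.mp hJdisj (PFilter.mem_principal.mpr le_rfl) h
  refine ⟨(↑J : Set L)ᶜ, ⟨?_, ?_, ?_, ?_, ?_⟩, ?_, hBJ⟩
  · intro x hx y hxy hy
    exact hx (J.lower hxy hy)
  · intro x hx y hy
    exact fun h => (hJprime.mem_or_mem h).elim hx hy
  · exact fun h => hBJ (J.lower le_top h)
  · exact fun h => h J.bot_mem
  · intro x y hxy
    by_contra h
    push_neg at h
    exact hxy (J.sup_mem (not_not.mp h.1) (not_not.mp h.2))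
  · rw [Set.ssubset_def]
    have huJ : u ∈ (J : Set L) := hIJ ⟨⊥, rbot, le_sup_left⟩
    refine ⟨fun x hx => ?_, fun hsub => (hsub h2) huJ⟩
    by_contra hxr
    exact hx (hIJ (hcomplI x hxr))

lemma main_aux {L : Type*} [CoheytingAlgebra L] :
    ∀ n : ℕ, ∀ q : Fin (n + 1) → Set L, (∀ i, IsPrimeFilter (q i)) →
      (∀ i j : Fin (n + 1), i < j → q j ⊂ q i) → ∃ b ∈ q 0, CodimGE b n := by
  intro n
  induction n with
  | zero =>
    intro q hq _
    refine ⟨⊤, (hq 0).2.2.1, fun r hr _ => ⟨fun _ => r, fun _ => hr, fun i j hij => ?_, rfl⟩⟩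
    exact absurd (Fin.lt_iff_val_lt_val.mp hij) (by omega)
  | succ n ih =>
    intro q hq hchain
    obtain ⟨B, hB, hBcd⟩ := ih (fun i => q i.succ) (fun i => hq i.succ)
      (fun i j hij => hchain i.succ j.succ (Fin.succ_lt_succ_iff.mpr hij))
    have h01 : q 1 ⊂ q 0 := hchain 0 1 (by simp [Fin.lt_iff_val_lt_val])
    obtain ⟨u, hu0, hu1⟩ := Set.exists_of_ssubset h01
    have hB1 : B ∈ q 1 := by
      have : (0 : Fin (n + 1)).succ = (1 : Fin (n + 2)) := rfl
      rwa [this] at hB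
    have hBu1 : B \ u ∈ q 1 := by
      have hle : B ≤ u ⊔ B \ u := sdiff_le_iff.mp le_rfl
      rcases (hq 1).2.2.2.2 u (B \ u) ((hq 1).1 B hB1 _ hle) with h | h
      · exact absurd h hu1
      · exact h
    refine ⟨u ⊓ (B \ u), (hq 0).2.1 u hu0 _ (h01.subset hBu1), ?_⟩
    intro r hr hbr
    have hur : u ∈ r := hr.1 _ hbr u inf_le_left
    have hBur : B \ u ∈ r := hr.1 _ hbr _ inf_le_right
    obtain ⟨r', hr', hr'r, hBr'⟩ := key hr hBur hur
    obtain ⟨c, hc, hcc, hc0⟩ := hBcd r' hr' hBr'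
    refine ⟨Fin.cases r c, fun i => ?_, fun i j hij => ?_, Fin.cases_zero ..⟩
    · induction i using Fin.cases with
      | zero => exact hr
      | succ k => exact hc k
    · induction j using Fin.cases with
      | zero => exact absurd hij (by simp [Fin.lt_iff_val_lt_val])
      | succ k =>
        have hckr' : c k ⊆ r' := by
          rcases eq_or_ne k 0 with rfl | hk
          · exact hc0.le
          · exact hc0 ▸ (hcc 0 k (Fin.pos_of_ne_zero hk)).subset
        induction i using Fin.cases with
        | zero =>
          simpa using Set.ssubset_of_subset_of_ssubset hckr' hr'r
        | succ m =>
          have : m < k := by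
            rw [Fin.lt_iff_val_lt_val] at hij ⊢
            simpa using hij
          simpa using hcc m k this

theorem stmt5 {L : Type*} [CoheytingAlgebra L] (p : Set L) (hp : IsPrimeFilter p)
    (n : ℕ) (q : Fin (n + 1) → Set L)
    (hq : ∀ i, IsPrimeFilter (q i))
    (hchain : ∀ i j : Fin (n + 1), i < j → q j ⊂ q i)
    (hq0 : q 0 = p) :
    ∃ b ∈ p, CodimGE b n := by
  obtain ⟨b, hb, hbc⟩ := main_aux n q hq hchain
  exact ⟨b, hq0 ▸ hb, hbc⟩
end

section
/- Let φ : L → L' be a homomorphism of co-Heyting algebras (preserving ⊥, ⊤, ⊔, ⊓ and \). Then for every natural number d and every a ∈ L, if codim_L a ≥ d then codim_{L'} φ(a) ≥ d; that is, φ(dL) ⊆ dL'. -/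
section Aux

open Order

/-- Preimage of a prime filter under a coheyting hom is a prime filter. -/
lemma isPrimeFilter_preimage {L L' : Type*} [CoheytingAlgebra L] [CoheytingAlgebra L']
    (φ : CoheytingHom L L') {p : Set L'} (hp : IsPrimeFilter p) :
    IsPrimeFilter (φ ⁻¹' p) := by
  obtain ⟨hup, hinf, htop, hbot, hprime⟩ := hp
  refine ⟨fun x hx y hxy => hup _ hx _ (OrderHomClass.mono φ hxy), ?_, ?_, ?_, ?_⟩
  · intro x hx y hy
    show φ (x ⊓ y) ∈ p
    rw [map_inf]
    exact hinf _ hx _ hy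
  · show φ ⊤ ∈ p; rw [map_top]; exact htop
  · show φ ⊥ ∉ p; rw [map_bot]; exact hbot
  · intro x y hxy
    apply hprime
    rw [← map_sup]; exact hxy

/-- Key step: a prime filter of `L` strictly inside the preimage of a prime filter `p'`
can be pushed to a prime filter of `L'` strictly inside `p'`. -/
lemma key_step {L L' : Type*} [CoheytingAlgebra L] [CoheytingAlgebra L']
    (φ : CoheytingHom L L') {p' : Set L'} (hp' : IsPrimeFilter p')
    {q : Set L} (hq : IsPrimeFilter q) (hsub : q ⊆ φ ⁻¹' p')
    {b₀ : L} (hb₀p : φ b₀ ∈ p') (hb₀q : b₀ ∉ q) :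
    ∃ q' : Set L', IsPrimeFilter q' ∧ q' ⊂ p' ∧ q ⊆ φ ⁻¹' q' := by
  obtain ⟨hup, hinf, htop, hbot, hprime⟩ := hq
  obtain ⟨hup', hinf', htop', hbot', hprime'⟩ := hp'
  -- the filter generated by the image of q
  have hF : IsPFilter {z : L' | ∃ x ∈ q, φ x ≤ z} := by
    refine IsPFilter.of_def ⟨⊤, ⊤, htop, by simp⟩ ?_ ?_
    · rintro z₁ ⟨x₁, hx₁, hφ₁⟩ z₂ ⟨x₂, hx₂, hφ₂⟩
      refine ⟨z₁ ⊓ z₂, ⟨x₁ ⊓ x₂, hinf _ hx₁ _ hx₂, ?_⟩, inf_le_left, inf_le_right⟩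
      rw [map_inf]; exact inf_le_inf hφ₁ hφ₂
    · rintro x y hxy ⟨a, ha, hφ⟩
      exact ⟨a, ha, hφ.trans hxy⟩
  set F : PFilter L' := hF.toPFilter with hFdef
  have memF : ∀ z : L', z ∈ F ↔ ∃ x ∈ q, φ x ≤ z := fun z => Iff.rfl
  -- the ideal generated by the complement of p' together with φ b₀
  have hI : IsIdeal {z : L' | ∃ c ∉ p', z ≤ c ⊔ φ b₀} := by
    constructor
    · rintro x y hxy ⟨c, hc, hy⟩
      exact ⟨c, hc, le_trans hxy hy⟩
    · exact ⟨⊥, ⊥, hbot', bot_le⟩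
    · rintro z₁ ⟨c₁, hc₁, h₁⟩ z₂ ⟨c₂, hc₂, h₂⟩
      refine ⟨z₁ ⊔ z₂, ⟨c₁ ⊔ c₂, ?_, ?_⟩, le_sup_left, le_sup_right⟩
      · intro hcc
        rcases hprime' _ _ hcc with h | h
        exacts [hc₁ h, hc₂ h]
      · refine sup_le (h₁.trans ?_) (h₂.trans ?_) <;>
          exact sup_le_sup (by simp) le_rfl
    
  set I : Order.Ideal L' := hI.toIdeal with hIdef
  have memI : ∀ z : L', z ∈ I ↔ ∃ c ∉ p', z ≤ c ⊔ φ b₀ := fun z => Iff.rfl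
  -- F and I are disjoint
  have hdisj : Disjoint (F : Set L') (I : Set L') := by
    rw [Set.disjoint_left]
    rintro z ⟨x, hx, hφx⟩ ⟨c, hc, hz⟩
    -- φ (x \ b₀) ≤ c
    have h1 : φ x ≤ c ⊔ φ b₀ := hφx.trans hz
    have h2 : φ (x \ b₀) ≤ c := by
      rw [map_sdiff, sdiff_le_iff, sup_comm]; exact h1
    have h3 : x \ b₀ ∈ q := by
      rcases hprime _ _ (hup _ hx _ (le_sup_sdiff : x ≤ b₀ ⊔ x \ b₀)) with h | h
      · exact absurd h hb₀q
      · exact h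
    exact hc (hup' _ (hsub h3) _ h2)
  obtain ⟨J, hJprime, hIJ, hJdisj⟩ :=
    DistribLattice.prime_ideal_of_disjoint_filter_ideal hdisj
  refine ⟨(J : Set L')ᶜ, ⟨?_, ?_, ?_, ?_, ?_⟩, ?_, ?_⟩
  · intro x hx y hxy hy
    exact hx (J.lower hxy hy)
  · intro x hx y hy
    intro hmem
    rcases hJprime.mem_or_mem hmem with h | h
    exacts [hx h, hy h]
  · exact Set.disjoint_left.1 hJdisj ⟨⊤, htop, by simp⟩
  · simp only [Set.mem_compl_iff, not_not]
    exact J.bot_mem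
  · intro x y hxy
    by_contra hcon
    push_neg at hcon
    simp only [Set.mem_compl_iff, not_not] at hcon
    exact hxy (J.sup_mem hcon.1 hcon.2)
  · constructor
    · -- Jᶜ ⊆ p'
      intro z hz
      by_contra hzp
      exact hz (hIJ (show z ∈ I from ⟨z, hzp, le_sup_left⟩))
    · -- not p' ⊆ Jᶜ : φ b₀ ∈ p' but φ b₀ ∈ J
      intro hsub'
      have : φ b₀ ∈ I := ⟨⊥, hbot', by simp⟩
      exact (hsub' hb₀p) (hIJ this)
  · intro x hx
    have : φ x ∈ F := ⟨x, hx, le_rfl⟩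
    exact Set.disjoint_left.1 hJdisj this

/-- Lift a descending chain of prime filters along φ. -/
lemma chain_lift {L L' : Type*} [CoheytingAlgebra L] [CoheytingAlgebra L']
    (φ : CoheytingHom L L') :
    ∀ n : ℕ, ∀ q : Fin (n + 1) → Set L, (∀ i, IsPrimeFilter (q i)) →
      (∀ i j : Fin (n + 1), i < j → q j ⊂ q i) →
      ∀ p' : Set L', IsPrimeFilter p' → q 0 ⊆ φ ⁻¹' p' →
      ∃ q' : Fin (n + 1) → Set L', (∀ i, IsPrimeFilter (q' i)) ∧
        (∀ i j : Fin (n + 1), i < j → q' j ⊂ q' i) ∧ q' 0 = p' := by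
  intro n
  induction n with
  | zero =>
    intro q hq hchain p' hp' h0
    refine ⟨fun _ => p', fun _ => hp', ?_, rfl⟩
    intro i j hij
    have hi := i.isLt; have hj := j.isLt
    rw [Fin.lt_iff_val_lt_val] at hij
    omega
  | succ n ih =>
    intro q hq hchain p' hp' h0
    -- push q 1 into a prime filter strictly below p'
    have h10 : q 1 ⊂ q 0 := hchain 0 1 (by norm_num)
    obtain ⟨b₀, hb₀0, hb₀1⟩ := Set.exists_of_ssubset h10
    obtain ⟨q₁', hq₁'pf, hq₁'ss, hq₁'sub⟩ :=
      key_step φ hp' (hq 1) ((subset_of_ssubset h10).trans h0)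
        (h0 hb₀0) hb₀1
    -- lift the tail chain
    obtain ⟨r, hrpf, hrchain, hr0⟩ :=
      ih (fun i => q i.succ) (fun i => hq i.succ)
        (fun i j hij => hchain i.succ j.succ (by simpa using hij))
        q₁' hq₁'pf (by simpa using hq₁'sub)
    refine ⟨Fin.cons p' r, ?_, ?_, by simp⟩
    · intro i
      refine Fin.cases ?_ (fun i => ?_) i
      · simpa using hp'
      · simpa using hrpf i
    · intro i j hij
      rcases Fin.eq_zero_or_eq_succ j with rfl | ⟨j', rfl⟩
      · exact absurd hij (Fin.not_lt_zero i)
      · rcases Fin.eq_zero_or_eq_succ i with rfl | ⟨i', rfl⟩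
        · simp only [Fin.cons_succ, Fin.cons_zero]
          rcases eq_or_ne j' 0 with rfl | hj
          · rw [hr0]; exact hq₁'ss
          · exact ssubset_trans (hrchain 0 j' (Fin.pos_iff_ne_zero.2 hj))
              (hr0.symm ▸ hq₁'ss)
        · simp only [Fin.cons_succ]
          exact hrchain i' j' (by rwa [Fin.succ_lt_succ_iff] at hij)

end Aux

theorem stmt6 {L L' : Type*} [CoheytingAlgebra L] [CoheytingAlgebra L']
    (φ : CoheytingHom L L') (d : ℕ) (a : L)
    (h : CodimGE a d) :
    CodimGE (φ a) d := by
  intro p' hp' ha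
  obtain ⟨q, hqpf, hqchain, hq0⟩ := h (φ ⁻¹' p') (isPrimeFilter_preimage φ hp') ha
  exact chain_lift φ d q hqpf hqchain p' hp' (by rw [hq0])
end

section
/- Let φ : L → L' be a surjective homomorphism of co-Heyting algebras (preserving ⊥, ⊤, ⊔, ⊓ and \). Then for every natural number d, φ(dL) = dL', i.e. the image under φ of the set of elements of L of codimension ≥ d is exactly the set of elements of L' of codimension ≥ d. -/
section PF

variable {L : Type*} [DistribLattice L] [BoundedOrder L]

/-- From Mathlib's prime separator: a filter disjoint from an ideal can be extended
to a prime filter (in our concrete sense) still disjoint from the ideal. -/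
lemma exists_primeFilter' (F : Order.PFilter L) (I : Order.Ideal L)
    (h : Disjoint (F : Set L) (I : Set L)) :
    ∃ p : Set L, IsPrimeFilter p ∧ (F : Set L) ⊆ p ∧ ∀ y ∈ I, y ∉ p := by
  obtain ⟨J, hJ, hIJ, hdisj⟩ := DistribLattice.prime_ideal_of_disjoint_filter_ideal h
  have hJproper : Order.Ideal.IsProper J := hJ.toIsProper
  refine ⟨(J : Set L)ᶜ, ⟨?_, ?_, ?_, ?_, ?_⟩, ?_, ?_⟩
  · intro x hx y hxy hy
    exact hx (J.lower hxy hy)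
  · intro x hx y hy hxy
    rcases hJ.mem_or_mem hxy with h1 | h1
    · exact hx h1
    · exact hy h1
  · intro htop
    exact hJproper.top_notMem htop
  · intro hbot
    exact hbot (J.bot_mem)
  · intro x y hxy
    by_contra hc
    push_neg at hc
    obtain ⟨hx, hy⟩ := hc
    simp only [Set.mem_compl_iff, not_not] at hx hy
    exact hxy (J.sup_mem hx hy)
  · intro y hy hyJ
    exact Set.disjoint_left.mp hdisj hy hyJ
  · intro y hyI hyJ
    exact hyJ (hIJ hyI)

end PF

section Ch

variable {L : Type*} [CoheytingAlgebra L]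

/-- The inductively defined "chain witness" elements. -/
def Ch (L : Type*) [CoheytingAlgebra L] : ℕ → Set L
  | 0 => {⊤}
  | n + 1 => {e | ∃ x : L, ∃ e' ∈ Ch L n, e = x ⊓ (e' \ x)}

/-- `Depth p n`: there is a strictly decreasing chain of prime filters of length `n`
starting at `p`. -/
def Depth (p : Set L) (n : ℕ) : Prop :=
  ∃ q : Fin (n + 1) → Set L, (∀ i, IsPrimeFilter (q i)) ∧
    (∀ i j : Fin (n + 1), i < j → q j ⊂ q i) ∧ q 0 = p

lemma depth_zero {p : Set L} (hp : IsPrimeFilter p) : Depth p 0 := by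
  refine ⟨fun _ => p, fun _ => hp, ?_, rfl⟩
  intro i j hij
  have h1 := i.isLt
  have h2 := j.isLt
  rw [Fin.lt_def] at hij
  omega

lemma stone {p : Set L} (hp : IsPrimeFilter p) {a x : L} (h : a \ x ∈ p) :
    ∃ q : Set L, IsPrimeFilter q ∧ q ⊆ p ∧ a ∈ q ∧ x ∉ q := by
  obtain ⟨hup, hinf, htop, hbot, hprime⟩ := hp
  set I : Order.Ideal L :=
    { carrier := {y | ∃ z, z ∉ p ∧ y ≤ z ⊔ x}
      lower' := by
        rintro u v hvu ⟨z, hz, hu⟩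
        exact ⟨z, hz, hvu.trans hu⟩
      nonempty' := ⟨⊥, ⊥, hbot, bot_le⟩
      directed' := by
        rintro u ⟨z1, hz1, hu⟩ v ⟨z2, hz2, hv⟩
        refine ⟨u ⊔ v, ⟨z1 ⊔ z2, ?_, ?_⟩, le_sup_left, le_sup_right⟩
        · intro hz
          rcases hprime z1 z2 hz with h1 | h1
          · exact hz1 h1
          · exact hz2 h1
        · refine sup_le (hu.trans ?_) (hv.trans ?_)
          · exact sup_le_sup_right le_sup_left x
          · exact sup_le_sup_right le_sup_right x } with hI
  have hmem : ∀ y : L, y ∈ (I : Set L) ↔ ∃ z, z ∉ p ∧ y ≤ z ⊔ x := fun y => Iff.rfl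
  have hdisj : Disjoint ((Order.PFilter.principal a : Order.PFilter L) : Set L) (I : Set L) := by
    rw [Set.disjoint_left]
    rintro y hy ⟨z, hz, hyzx⟩
    have hay : a ≤ y := hy
    have : a \ x ≤ z := by
      rw [sdiff_le_iff, sup_comm]
      exact hay.trans hyzx
    exact hz (hup _ h _ this)
  obtain ⟨q, hq, hFq, hIq⟩ := exists_primeFilter' _ _ hdisj
  refine ⟨q, hq, ?_, ?_, ?_⟩
  · intro y hyq
    by_contra hyp
    exact hIq y ((hmem y).mpr ⟨y, hyp, le_sup_left⟩) hyq
  · exact hFq (le_refl a)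
  · exact hIq x ((hmem x).mpr ⟨⊥, hbot, le_sup_right⟩)

lemma depth_succ {p : Set L} {n : ℕ} (hp : IsPrimeFilter p) :
    Depth p (n + 1) ↔ ∃ q : Set L, IsPrimeFilter q ∧ q ⊂ p ∧ Depth q n := by
  constructor
  · rintro ⟨q, hq, hc, h0⟩
    have h01 : (0 : Fin (n + 2)) < 1 := by
      rw [Fin.lt_def]
      simp
    refine ⟨q 1, hq 1, h0 ▸ hc 0 1 h01, fun i => q i.succ, fun i => hq i.succ, ?_, ?_⟩
    · intro i j hij
      exact hc i.succ j.succ (Fin.succ_lt_succ_iff.mpr hij)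
    · congr 1
  · rintro ⟨q, hqpf, hqp, r, hr, hrc, hr0⟩
    refine ⟨Fin.cases p r, ?_, ?_, by simp⟩
    · intro i
      induction i using Fin.cases with
      | zero => simpa using hp
      | succ ii => simpa using hr ii
    · intro i j hij
      induction j using Fin.cases with
      | zero => exact absurd hij (Fin.not_lt_zero i)
      | succ jj =>
        induction i using Fin.cases with
        | zero =>
          simp only [Fin.cases_succ, Fin.cases_zero]
          have hsub : r jj ⊆ q := by
            rcases eq_or_ne jj 0 with h | h
            · rw [h, hr0]
            · exact hr0 ▸ (hrc 0 jj (Fin.pos_of_ne_zero h)).subset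
          exact Set.ssubset_of_subset_of_ssubset hsub hqp
        | succ ii =>
          simp only [Fin.cases_succ]
          exact hrc ii jj (Fin.succ_lt_succ_iff.mp hij)

lemma depth_iff : ∀ (n : ℕ) {p : Set L}, IsPrimeFilter p →
    (Depth p n ↔ ∃ e ∈ Ch L n, e ∈ p)
  | 0, p, hp => by
    constructor
    · intro _
      exact ⟨⊤, rfl, hp.2.2.1⟩
    · intro _
      exact depth_zero hp
  | n + 1, p, hp => by
    constructor
    · intro hd
      obtain ⟨q, hq, hqp, hdq⟩ := (depth_succ hp).mp hd
      obtain ⟨e', he'Ch, he'q⟩ := (depth_iff n hq).mp hdq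
      obtain ⟨x, hxp, hxq⟩ := Set.exists_of_ssubset hqp
      have hsupq : x ⊔ e' \ x ∈ q := hq.1 e' he'q _ le_sup_sdiff
      have hsdq : e' \ x ∈ q := by
        rcases hq.2.2.2.2 x (e' \ x) hsupq with h | h
        · exact absurd h hxq
        · exact h
      have hsdp : e' \ x ∈ p := hqp.subset hsdq
      exact ⟨x ⊓ (e' \ x), ⟨x, e', he'Ch, rfl⟩, hp.2.1 x hxp _ hsdp⟩
    · rintro ⟨e, ⟨x, e', he'Ch, rfl⟩, hep⟩
      have hxp : x ∈ p := hp.1 _ hep x inf_le_left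
      have hsdp : e' \ x ∈ p := hp.1 _ hep _ inf_le_right
      obtain ⟨q, hq, hqsub, he'q, hxq⟩ := stone hp hsdp
      have hqp : q ⊂ p := by
        rw [Set.ssubset_def]
        exact ⟨hqsub, fun hps => hxq (hps hxp)⟩
      exact (depth_succ hp).mpr
        ⟨q, hq, hqp, (depth_iff n hq).mpr ⟨e', he'Ch, he'q⟩⟩

lemma mem_of_finsetSup_mem {p : Set L} (hp : IsPrimeFilter p) {t : Finset L}
    (h : t.sup id ∈ p) : ∃ e ∈ t, e ∈ p := by
  classical
  induction t using Finset.induction_on with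
  | empty =>
    rw [Finset.sup_empty] at h
    exact absurd h hp.2.2.2.1
  | @insert e t hne ih =>
    rw [Finset.sup_insert] at h
    rcases hp.2.2.2.2 _ _ h with h1 | h1
    · exact ⟨e, Finset.mem_insert_self e t, h1⟩
    · obtain ⟨e', he't, he'p⟩ := ih h1
      exact ⟨e', Finset.mem_insert_of_mem he't, he'p⟩

lemma codim_iff {a : L} {n : ℕ} :
    CodimGE a n ↔ ∃ t : Finset L, ↑t ⊆ Ch L n ∧ a ≤ t.sup id := by
  constructor
  · intro hc
    by_contra hcon
    push_neg at hcon
    set I : Order.Ideal L :=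
      { carrier := {y | ∃ t : Finset L, ↑t ⊆ Ch L n ∧ y ≤ t.sup id}
        lower' := by
          rintro u v hvu ⟨t, ht, hu⟩
          exact ⟨t, ht, hvu.trans hu⟩
        nonempty' := ⟨⊥, ∅, by simp⟩
        directed' := by
          rintro u ⟨t1, ht1, hu⟩ v ⟨t2, ht2, hv⟩
          classical
          refine ⟨u ⊔ v, ⟨t1 ∪ t2, ?_, ?_⟩, le_sup_left, le_sup_right⟩
          · rw [Finset.coe_union]
            exact Set.union_subset ht1 ht2
          · rw [Finset.sup_union]
            exact sup_le_sup hu hv } with hI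
    have hdisj : Disjoint ((Order.PFilter.principal a : Order.PFilter L) : Set L)
        (I : Set L) := by
      rw [Set.disjoint_left]
      rintro y hy ⟨t, ht, hyt⟩
      have hay : a ≤ y := hy
      exact hcon t ht (hay.trans hyt)
    obtain ⟨p, hp, hFp, hIp⟩ := exists_primeFilter' _ _ hdisj
    have hap : a ∈ p := hFp (le_refl a)
    have hdp : Depth p n := hc p hp hap
    obtain ⟨e, heCh, hep⟩ := (depth_iff n hp).mp hdp
    refine hIp e ⟨{e}, ?_, by simp⟩ hep
    simpa using heCh
  · rintro ⟨t, hts, hat⟩ p hp hap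
    have hsup : t.sup id ∈ p := hp.1 a hap _ hat
    obtain ⟨e, het, hep⟩ := mem_of_finsetSup_mem hp hsup
    exact (depth_iff n hp).mpr ⟨e, hts het, hep⟩

end Ch

section Transfer

variable {L L' : Type*} [CoheytingAlgebra L] [CoheytingAlgebra L']

lemma ch_map (φ : CoheytingHom L L') : ∀ n, ∀ e ∈ Ch L n, φ e ∈ Ch L' n
  | 0, e, he => by
    have : e = ⊤ := he
    simp [this, Ch]
  | n + 1, e, he => by
    obtain ⟨x, e', he', rfl⟩ := he
    exact ⟨φ x, φ e', ch_map φ n e' he', by rw [map_inf, map_sdiff]⟩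

lemma ch_lift (φ : CoheytingHom L L') (hφ : Function.Surjective φ) :
    ∀ n, ∀ e' ∈ Ch L' n, ∃ e ∈ Ch L n, φ e = e'
  | 0, e', he' => by
    have : e' = ⊤ := he'
    exact ⟨⊤, rfl, by simp [this]⟩
  | n + 1, e', he' => by
    obtain ⟨y, f', hf', rfl⟩ := he'
    obtain ⟨f, hf, rfl⟩ := ch_lift φ hφ n f' hf'
    obtain ⟨x, rfl⟩ := hφ y
    exact ⟨x ⊓ (f \ x), ⟨x, f, hf, rfl⟩, by rw [map_inf, map_sdiff]⟩

lemma finset_lift (φ : CoheytingHom L L') (hφ : Function.Surjective φ) (d : ℕ) :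
    ∀ t' : Finset L', ↑t' ⊆ Ch L' d → ∃ t : Finset L, ↑t ⊆ Ch L d ∧
      φ (t.sup id) = t'.sup id := by
  classical
  intro t'
  induction t' using Finset.induction_on with
  | empty =>
    intro _
    exact ⟨∅, by simp, by simp⟩
  | @insert e' t' hne ih =>
    intro hsub
    rw [Finset.coe_insert, Set.insert_subset_iff] at hsub
    obtain ⟨t, hts, hsup⟩ := ih hsub.2
    obtain ⟨e, heCh, hee'⟩ := ch_lift φ hφ d e' hsub.1
    refine ⟨insert e t, ?_, ?_⟩
    · rw [Finset.coe_insert, Set.insert_subset_iff]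
      exact ⟨heCh, hts⟩
    · rw [Finset.sup_insert, Finset.sup_insert, map_sup]
      simp only [id_eq]
      rw [hee', hsup]

end Transfer

theorem stmt7 {L L' : Type*} [CoheytingAlgebra L] [CoheytingAlgebra L']
    (φ : CoheytingHom L L') (hφ : Function.Surjective φ) (d : ℕ) :
    φ '' {a : L | CodimGE a d} = {b : L' | CodimGE b d} := by
  classical
  ext b
  simp only [Set.mem_image, Set.mem_setOf_eq]
  constructor
  · rintro ⟨a, ha, rfl⟩
    rw [codim_iff] at ha ⊢
    obtain ⟨t, hts, hat⟩ := ha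
    refine ⟨t.image φ, ?_, ?_⟩
    · rw [Finset.coe_image]
      rintro _ ⟨e, he, rfl⟩
      exact ch_map φ d e (hts he)
    · have h1 : φ a ≤ φ (t.sup id) := OrderHomClass.mono φ hat
      have h2 : φ (t.sup id) = (t.image φ).sup id := by
        rw [Finset.sup_image]
        exact map_finset_sup φ t id
      rw [h2] at h1
      exact h1
  · intro hb
    rw [codim_iff] at hb
    obtain ⟨t', ht's, hbt'⟩ := hb
    obtain ⟨t, hts, hsup⟩ := finset_lift φ hφ d t' ht's
    obtain ⟨c, rfl⟩ := hφ b
    refine ⟨c ⊓ t.sup id, codim_iff.mpr ⟨t, hts, inf_le_right⟩, ?_⟩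
    rw [map_inf, hsup]
    exact inf_eq_left.mpr hbt'
end

section
/- Let L be a co-Heyting algebra and d a natural number. If dL = { x ∈ L | x ≤ e_d } and (d+1)L = { x ∈ L | x ≤ e_{d+1} } for elements e_d, e_{d+1} ∈ L, then e_{d+1} ≪ e_d, i.e. for every c ∈ L, e_d ≤ e_{d+1} ⊔ c implies e_d ≤ c. -/
section Aux

variable {L : Type*} [CoheytingAlgebra L]

/-- Prime filter separation theorem: a filter disjoint from an ideal can be
extended to a prime filter still disjoint from the ideal. -/
lemma filterSep (G I : Set L)
    (hGup : ∀ x ∈ G, ∀ y : L, x ≤ y → y ∈ G)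
    (hGmeet : ∀ x ∈ G, ∀ y ∈ G, x ⊓ y ∈ G)
    (hGtop : (⊤ : L) ∈ G)
    (hIdown : ∀ x ∈ I, ∀ y : L, y ≤ x → y ∈ I)
    (hIsup : ∀ x ∈ I, ∀ y ∈ I, x ⊔ y ∈ I)
    (hIbot : (⊥ : L) ∈ I)
    (hdisj : ∀ x, x ∈ G → x ∉ I) :
    ∃ s : Set L, IsPrimeFilter s ∧ G ⊆ s ∧ ∀ x ∈ s, x ∉ I := by
  classical
  set T : Set (Set L) := {H | (∀ x ∈ H, ∀ y : L, x ≤ y → y ∈ H) ∧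
      (∀ x ∈ H, ∀ y ∈ H, x ⊓ y ∈ H) ∧ (⊤ : L) ∈ H ∧ (∀ x ∈ H, x ∉ I)} with hT
  have hGT : G ∈ T := ⟨hGup, hGmeet, hGtop, hdisj⟩
  have hzorn : ∀ c ⊆ T, IsChain (· ⊆ ·) c → c.Nonempty →
      ∃ ub ∈ T, ∀ s ∈ c, s ⊆ ub := by
    intro c hcT hchain hcne
    refine ⟨⋃₀ c, ?_, fun s hs => Set.subset_sUnion_of_mem hs⟩
    obtain ⟨H0, hH0⟩ := hcne
    refine ⟨?_, ?_, ?_, ?_⟩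
    · rintro x ⟨H, hH, hxH⟩ y hxy
      exact ⟨H, hH, (hcT hH).1 _ hxH _ hxy⟩
    · rintro x ⟨H, hH, hxH⟩ y ⟨H', hH', hyH'⟩
      rcases hchain.total hH hH' with h | h
      · exact ⟨H', hH', (hcT hH').2.1 _ (h hxH) _ hyH'⟩
      · exact ⟨H, hH, (hcT hH).2.1 _ hxH _ (h hyH')⟩
    · exact ⟨H0, hH0, (hcT hH0).2.2.1⟩
    · rintro x ⟨H, hH, hxH⟩ hxI
      exact (hcT hH).2.2.2 _ hxH hxI
  obtain ⟨M, hGM, hMT, hMmax⟩ := zorn_subset_nonempty T hzorn G hGT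
  · -- M is a prime filter
    obtain ⟨hMup, hMmeet, hMtop, hMI⟩ := hMT
    have hbot : (⊥ : L) ∉ M := fun h => hMI _ h hIbot
    refine ⟨M, ⟨hMup, hMmeet, hMtop, hbot, ?_⟩, hGM, hMI⟩
    -- primality
    intro x y hxy
    by_contra hcon
    push_neg at hcon
    obtain ⟨hx, hy⟩ := hcon
    -- the filter generated by M and x meets I, same for y
    have key : ∀ w : L, w ∉ M → ∃ m ∈ M, m ⊓ w ∈ I := by
      intro w hw
      set Hw : Set L := {t | ∃ m ∈ M, m ⊓ w ≤ t} with hHw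
      by_contra hno
      push_neg at hno
      have hHwT : Hw ∈ T := by
        refine ⟨?_, ?_, ?_, ?_⟩
        · rintro t ⟨m, hm, hmt⟩ u htu
          exact ⟨m, hm, hmt.trans htu⟩
        · rintro t ⟨m, hm, hmt⟩ u ⟨m', hm', hm'u⟩
          exact ⟨m ⊓ m', hMmeet _ hm _ hm', by
            calc m ⊓ m' ⊓ w ≤ (m ⊓ w) ⊓ (m' ⊓ w) := by
                  simp only [le_inf_iff, inf_le_right, and_true]
                  constructor
                  · exact inf_le_of_left_le inf_le_left
                  · exact inf_le_of_left_le inf_le_right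
              _ ≤ t ⊓ u := inf_le_inf hmt hm'u⟩
        · exact ⟨⊤, hMtop, inf_le_left⟩
        · intro t ht htI
          rcases ht with ⟨m, hm, hmt⟩
          exact hno m hm (hIdown _ htI _ hmt)
      have hMHw : M ⊆ Hw := fun m hm => ⟨m, hm, inf_le_left⟩
      have hHwM : Hw ⊆ M := hMmax hHwT hMHw
      have hwHw : w ∈ Hw := ⟨⊤, hMtop, inf_le_right⟩
      exact hw (hHwM hwHw)
    obtain ⟨m, hm, hmx⟩ := key x hx
    obtain ⟨m', hm', hm'y⟩ := key y hy
    have hmem : m ⊓ m' ⊓ (x ⊔ y) ∈ M := hMmeet _ (hMmeet _ hm _ hm') _ hxy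
    have hIm : m ⊓ m' ⊓ (x ⊔ y) ∈ I := by
      have hdecomp : m ⊓ m' ⊓ (x ⊔ y) = (m ⊓ m' ⊓ x) ⊔ (m ⊓ m' ⊓ y) := inf_sup_left _ _ _
      have h1 : m ⊓ m' ⊓ x ∈ I := hIdown _ hmx _ (by
        refine inf_le_inf ?_ le_rfl
        exact inf_le_left)
      have h2 : m ⊓ m' ⊓ y ∈ I := hIdown _ hm'y _ (by
        refine inf_le_inf ?_ le_rfl
        exact inf_le_right)
      rw [hdecomp]
      exact hIsup _ h1 _ h2
    exact hMI _ hmem hIm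

/-- Any nonbottom element lies in some prime filter. -/
lemma exists_prime_mem {z : L} (hz : z ≠ ⊥) :
    ∃ s : Set L, IsPrimeFilter s ∧ z ∈ s := by
  obtain ⟨s, hs, hGs, -⟩ := filterSep {x | z ≤ x} {x | x ≤ ⊥}
    (fun x hx y hxy => le_trans hx hxy)
    (fun x hx y hy => le_inf hx hy)
    le_top
    (fun x hx y hyx => le_trans hyx hx)
    (fun x hx y hy => sup_le hx hy)
    le_rfl
    (fun x hzx hxbot => hz (le_bot_iff.mp (le_trans hzx hxbot)))
  exact ⟨s, hs, hGs le_rfl⟩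

/-- If `u ∈ s` and `v \ u ∈ s` for a prime filter `s`, then there is a prime
filter strictly contained in `s` which contains `v` (and misses `u`). -/
lemma exists_prime_ssubset {s : Set L} (hs : IsPrimeFilter s) {u v : L}
    (hu : u ∈ s) (hvu : v \ u ∈ s) :
    ∃ t : Set L, IsPrimeFilter t ∧ t ⊂ s ∧ v ∈ t := by
  obtain ⟨hup, hmeet, htop, hbot, hprime⟩ := hs
  obtain ⟨t, ht, hGt, htI⟩ := filterSep {x | v ≤ x} {x | ∃ i, i ∉ s ∧ x ≤ u ⊔ i}
    (fun x hx y hxy => le_trans hx hxy)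
    (fun x hx y hy => le_inf hx hy)
    le_top
    (by rintro x ⟨i, his, hxi⟩ y hyx; exact ⟨i, his, hyx.trans hxi⟩)
    (by
      rintro x ⟨i, his, hxi⟩ y ⟨i', hi's, hyi'⟩
      refine ⟨i ⊔ i', fun hmem => ?_, ?_⟩
      · rcases hprime _ _ hmem with h | h
        · exact his h
        · exact hi's h
      · calc x ⊔ y ≤ (u ⊔ i) ⊔ (u ⊔ i') := sup_le_sup hxi hyi'
          _ = u ⊔ (i ⊔ i') := by rw [sup_sup_sup_comm, sup_idem])
    ⟨⊥, hbot, le_sup_right⟩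
    (by
      rintro x hvx ⟨i, his, hxi⟩
      have : v \ u ≤ i := sdiff_le_iff.mpr (hvx.trans hxi)
      exact his (hup _ hvu _ this))
  have hts : t ⊆ s := by
    intro x hxt
    by_contra hxs
    exact htI _ hxt ⟨x, hxs, le_sup_right⟩
  have hut : u ∉ t := fun hut => htI _ hut ⟨⊥, hbot, le_sup_left⟩
  exact ⟨t, ht, ⟨hts, fun hsub => hut (hsub hu)⟩, hGt le_rfl⟩

lemma codimGE_top_zero : CodimGE (⊤ : L) 0 := by
  intro p hp _
  refine ⟨fun _ => p, fun _ => hp, ?_, rfl⟩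
  intro i j hij
  exact absurd hij (by omega)

/-- Boundary lemma: the codimension of `u ⊓ (v \ u)` exceeds that of `v`. -/
lemma codimGE_boundary {v : L} {k : ℕ} (hv : CodimGE v k) (u : L) :
    CodimGE (u ⊓ (v \ u)) (k + 1) := by
  intro p hp hmem
  have hu : u ∈ p := hp.1 _ hmem u inf_le_left
  have hvu : v \ u ∈ p := hp.1 _ hmem _ inf_le_right
  obtain ⟨t, ht, hts, hvt⟩ := exists_prime_ssubset hp hu hvu
  obtain ⟨q', hq'P, hq'C, hq'0⟩ := hv t ht hvt
  refine ⟨fun i => if h : (i : ℕ) = 0 then p else q' ⟨(i : ℕ) - 1, by omega⟩, ?_, ?_, by simp⟩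
  · intro i
    by_cases h : (i : ℕ) = 0
    · simpa [h] using hp
    · simpa [h] using hq'P _
  · intro i j hij
    have hij' : (i : ℕ) < (j : ℕ) := hij
    have hj0 : (j : ℕ) ≠ 0 := by omega
    have hq'sub : ∀ m : ℕ, ∀ hm : m < k + 1, q' ⟨m, hm⟩ ⊂ p := by
      intro m hm
      have h0 : q' ⟨0, by omega⟩ = t := by
        have : (⟨0, by omega⟩ : Fin (k + 1)) = 0 := rfl
        rw [this, hq'0]
      rcases Nat.eq_zero_or_pos m with rfl | hmpos
      · rw [h0]; exact hts
      · have : q' ⟨m, hm⟩ ⊂ q' ⟨0, by omega⟩ := hq'C _ _ (by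
          simp [Fin.lt_def, hmpos])
        rw [h0] at this
        exact this.trans hts
    by_cases h : (i : ℕ) = 0
    · simp only [h, hj0, dif_pos, dif_neg, not_false_iff]
      simpa using hq'sub ((j : ℕ) - 1) (by omega)
    · simp only [h, hj0, dif_neg, not_false_iff]
      exact hq'C _ _ (by simp [Fin.lt_def]; omega)

end Aux

theorem stmt9 {L : Type*} [CoheytingAlgebra L] (d : ℕ) (ed ed1 : L)
    (hd : {x : L | CodimGE x d} = {x : L | x ≤ ed})
    (hd1 : {x : L | CodimGE x (d + 1)} = {x : L | x ≤ ed1}) :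
    StrongBelow ed1 ed := by
  intro c hc
  set a : L := ed \ ed1 with ha
  set z : L := ed \ a with hzdef
  -- z ≤ ed1
  have hzF : z ≤ ed1 := sdiff_sdiff_le
  have hza : z \ a = z := sdiff_idem
  have hEaz : ed ≤ a ⊔ z := by
    have := le_sdiff_sup (a := a) (b := ed)
    rwa [sup_comm] at this
  have hzbot : z = ⊥ := by
    by_contra hzne
    obtain ⟨s₀, hs₀, hzs₀⟩ := exists_prime_mem hzne
    -- minimal prime filter containing z, inside s₀
    set S : Set (Set L) := {r | IsPrimeFilter r ∧ z ∈ r} with hS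
    have hzorn : ∀ ch ⊆ S, IsChain (· ⊆ ·) ch → ch.Nonempty →
        ∃ lb ∈ S, ∀ s ∈ ch, lb ⊆ s := by
      intro ch hchS hchain hchne
      refine ⟨⋂₀ ch, ⟨⟨?_, ?_, ?_, ?_, ?_⟩, ?_⟩, fun s hs => Set.sInter_subset_of_mem hs⟩
      · rintro x hx y hxy
        intro r hr
        exact (hchS hr).1.1 _ (hx r hr) _ hxy
      · intro x hx y hy r hr
        exact (hchS hr).1.2.1 _ (hx r hr) _ (hy r hr)
      · intro r hr
        exact (hchS hr).1.2.2.1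
      · obtain ⟨r0, hr0⟩ := hchne
        intro hbotmem
        exact (hchS hr0).1.2.2.2.1 (hbotmem r0 hr0)
      · intro x y hxy
        by_contra hcon
        push_neg at hcon
        obtain ⟨hx, hy⟩ := hcon
        simp only [Set.mem_sInter, not_forall] at hx hy
        obtain ⟨r1, hr1, hxr1⟩ := hx
        obtain ⟨r2, hr2, hyr2⟩ := hy
        rcases hchain.total hr1 hr2 with h | h
        · have hyr1 : y ∉ r1 := fun hy1 => hyr2 (h hy1)
          rcases (hchS hr1).1.2.2.2.2 _ _ (hxy r1 hr1) with h' | h'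
          · exact hxr1 h'
          · exact hyr1 h'
        · have hxr2 : x ∉ r2 := fun hx2 => hxr1 (h hx2)
          rcases (hchS hr2).1.2.2.2.2 _ _ (hxy r2 hr2) with h' | h'
          · exact hxr2 h'
          · exact hyr2 h'
      · intro r hr
        exact (hchS hr).2
    obtain ⟨r, hrs₀, hrmin⟩ := zorn_superset_nonempty S hzorn s₀ ⟨hs₀, hzs₀⟩
    obtain ⟨⟨hr, hzr⟩, hrminimal⟩ := hrmin
    -- a ∉ r
    have haR : a ∉ r := by
      intro haR
      obtain ⟨r', hr', hr'sub, hzr'⟩ := exists_prime_ssubset hr haR (hza ▸ hzr)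
      have : r ⊆ r' := hrminimal ⟨hr', hzr'⟩ hr'sub.subset
      exact hr'sub.ne (hr'sub.subset.antisymm this)
    -- chain of length d+1 below r
    have hcodz : CodimGE z (d + 1) := by
      have := Set.ext_iff.mp hd1 z
      simpa using this.mpr hzF
    obtain ⟨q, hqP, hqC, hq0⟩ := hcodz r hr hzr
    have h01 : (0 : Fin (d + 2)) < (1 : Fin (d + 2)) := by
      simp [Fin.lt_def]
    have ht1r : q 1 ⊂ q 0 := hqC 0 1 h01
    have ht1r' : q 1 ⊂ r := hq0 ▸ ht1r
    have hzt1 : z ∉ q 1 := by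
      intro hzt1
      have : r ⊆ q 1 := hrminimal ⟨hqP 1, hzt1⟩ ht1r'.subset
      exact ht1r'.ne (ht1r'.subset.antisymm this)
    have hat1 : a ∉ q 1 := fun h => haR (ht1r'.subset h)
    have hEt1 : ed ∉ q 1 := by
      intro hE
      have hsupmem : a ⊔ z ∈ q 1 := (hqP 1).1 _ hE _ hEaz
      rcases (hqP 1).2.2.2.2 _ _ hsupmem with h | h
      · exact hat1 h
      · exact hzt1 h
    -- the boundary tower
    have tower : ∀ k : ℕ, k ≤ d →
        ∃ v : L, CodimGE v k ∧ v ∈ q ⟨d + 1 - k, by omega⟩ := by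
      intro k
      induction k with
      | zero =>
        intro _
        exact ⟨⊤, codimGE_top_zero, (hqP _).2.2.1⟩
      | succ k ih =>
        intro hk
        obtain ⟨v, hv, hvmem⟩ := ih (by omega)
        have hlt : (⟨d + 1 - (k + 1), by omega⟩ : Fin (d + 2)) < ⟨d + 1 - k, by omega⟩ := by
          simp [Fin.lt_def]; omega
        have hss : q ⟨d + 1 - k, by omega⟩ ⊂ q ⟨d + 1 - (k + 1), by omega⟩ := hqC _ _ hlt
        obtain ⟨u, hu_lo, hu_hi⟩ := Set.exists_of_ssubset hss
        have hsdiff : v \ u ∈ q ⟨d + 1 - k, by omega⟩ := by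
          have hsup : u ⊔ v \ u ∈ q ⟨d + 1 - k, by omega⟩ :=
            (hqP _).1 _ hvmem _ le_sup_sdiff
          rcases (hqP _).2.2.2.2 _ _ hsup with h | h
          · exact absurd h hu_hi
          · exact h
        refine ⟨u ⊓ (v \ u), codimGE_boundary hv u, ?_⟩
        exact (hqP _).2.1 _ hu_lo _ (hss.subset hsdiff)
    obtain ⟨v, hvcod, hvmem⟩ := tower d le_rfl
    have hvE : v ≤ ed := by
      have := Set.ext_iff.mp hd v
      simpa using this.mp hvcod
    have hEmem : ed ∈ q ⟨d + 1 - d, by omega⟩ := (hqP _).1 _ hvmem _ hvE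
    have hidx : (⟨d + 1 - d, by omega⟩ : Fin (d + 2)) = 1 := by
      apply Fin.ext
      simp
    rw [hidx] at hEmem
    exact hEt1 hEmem
  -- conclude
  have hEa : ed ≤ a := by
    have h1 : ed ≤ z ⊔ a := le_sdiff_sup
    rwa [hzbot, bot_sup_eq] at h1
  exact hEa.trans (sdiff_le_iff.mpr hc)
end

section
/- Let L be a co-Heyting algebra and d a natural number. Define, for a tuple a_1, …, a_{d+1} ∈ L, elements P_0, P_1, …, P_{d+1} by P_0 = ⊤ and P_{k+1} = (P_k \ a_{k+1}) ⊓ a_{k+1}. Then the following are equivalent: (i) for all a_1, …, a_{d+1} ∈ L, P_{d+1}(a_1, …, a_{d+1}) = ⊥; (ii) L has dimension ≤ d, i.e. there is no strictly increasing chain q_0 ⊊ q_1 ⊊ ⋯ ⊊ q_{d+1} of d+2 prime filters of L. -/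
/-- Hosoi's terms: `P 0 = ⊤` and `P (k+1) = (P k \ a_{k+1}) ⊓ a_{k+1}`. -/
def Pterm {L : Type*} [CoheytingAlgebra L] : (k : ℕ) → (Fin k → L) → L
  | 0, _ => ⊤
  | k + 1, a => (Pterm k (fun i => a i.castSucc) \ a (Fin.last k)) ⊓ a (Fin.last k)

section Sep
variable {L : Type*} [DistribLattice L] [BoundedOrder L]

/-- Prime filter separation theorem. -/
theorem prime_filter_sep (F J : Set L)
    (hFup : ∀ x ∈ F, ∀ y : L, x ≤ y → y ∈ F)
    (hFinf : ∀ x ∈ F, ∀ y ∈ F, x ⊓ y ∈ F)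
    (hFtop : (⊤ : L) ∈ F)
    (hJdown : ∀ x ∈ J, ∀ y : L, y ≤ x → y ∈ J)
    (hJsup : ∀ x ∈ J, ∀ y ∈ J, x ⊔ y ∈ J)
    (hJbot : (⊥ : L) ∈ J)
    (hdisj : ∀ x ∈ F, x ∉ J) :
    ∃ G : Set L, IsPrimeFilter G ∧ F ⊆ G ∧ ∀ x ∈ G, x ∉ J := by
  classical
  set S : Set (Set L) := {G | (∀ x ∈ G, ∀ y : L, x ≤ y → y ∈ G) ∧
      (∀ x ∈ G, ∀ y ∈ G, x ⊓ y ∈ G) ∧ F ⊆ G ∧ ∀ x ∈ G, x ∉ J} with hS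
  have hFS : F ∈ S := ⟨hFup, hFinf, Set.Subset.rfl, hdisj⟩
  have hchain : ∀ c ⊆ S, IsChain (· ⊆ ·) c → c.Nonempty →
      ∃ ub ∈ S, ∀ s ∈ c, s ⊆ ub := by
    rintro c hcS hchain ⟨G0, hG0⟩
    refine ⟨⋃₀ c, ⟨?_, ?_, ?_, ?_⟩, fun s hs => Set.subset_sUnion_of_mem hs⟩
    · rintro x ⟨G, hG, hxG⟩ y hxy
      exact ⟨G, hG, (hcS hG).1 x hxG y hxy⟩
    · rintro x ⟨G, hG, hxG⟩ y ⟨G', hG', hyG'⟩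
      rcases hchain.total hG hG' with h | h
      · exact ⟨G', hG', (hcS hG').2.1 x (h hxG) y hyG'⟩
      · exact ⟨G, hG, (hcS hG).2.1 x hxG y (h hyG')⟩
    · exact ((hcS hG0).2.2.1).trans (Set.subset_sUnion_of_mem hG0)
    · rintro x ⟨G, hG, hxG⟩
      exact (hcS hG).2.2.2 x hxG
  obtain ⟨M, hFM, hMmax⟩ := zorn_subset_nonempty S hchain F hFS
  have hMS := hMmax.prop
  obtain ⟨hMup, hMinf, hFMsub, hMdisj⟩ := hMS
  have hMtop : (⊤ : L) ∈ M := hFMsub hFtop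
  refine ⟨M, ⟨hMup, hMinf, hMtop, fun hb => hMdisj ⊥ hb hJbot, ?_⟩, hFMsub, hMdisj⟩
  -- primeness from maximality
  intro x y hxy
  by_contra hcon
  push_neg at hcon
  obtain ⟨hx, hy⟩ := hcon
  -- extension by an element
  have ext : ∀ z : L, z ∉ M → ∃ jz ∈ J, ∃ m ∈ M, m ⊓ z ≤ jz := by
    intro z hz
    by_contra hno
    push_neg at hno
    set Mz : Set L := {w | ∃ m ∈ M, m ⊓ z ≤ w} with hMz
    have hMzS : Mz ∈ S := by
      refine ⟨?_, ?_, ?_, ?_⟩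
      · rintro u ⟨m, hm, hmu⟩ v huv; exact ⟨m, hm, hmu.trans huv⟩
      · rintro u ⟨m, hm, hmu⟩ v ⟨m', hm', hm'v⟩
        exact ⟨m ⊓ m', hMinf m hm m' hm', by
          calc m ⊓ m' ⊓ z ≤ (m ⊓ z) ⊓ (m' ⊓ z) :=
                le_inf (inf_le_inf_right z inf_le_left) (inf_le_inf_right z inf_le_right)
            _ ≤ u ⊓ v := inf_le_inf hmu hm'v⟩
      · intro f hf; exact ⟨f, hFMsub hf, inf_le_left⟩
      · rintro u ⟨m, hm, hmu⟩ hu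
        exact hno (m ⊓ z) (hJdown u hu _ hmu) m hm le_rfl
    have hMsub : M ⊆ Mz := fun m hm => ⟨m, hm, inf_le_left⟩
    have : Mz = M := hMmax.eq_of_ge hMzS hMsub
    exact hz (this ▸ ⟨⊤, hMtop, by simp⟩)
  obtain ⟨jx, hjx, m, hm, hmx⟩ := ext x hx
  obtain ⟨jy, hjy, m', hm', hm'y⟩ := ext y hy
  have hmem : (m ⊓ m') ⊓ (x ⊔ y) ∈ M := hMinf _ (hMinf m hm m' hm') _ hxy
  have hle : (m ⊓ m') ⊓ (x ⊔ y) ≤ jx ⊔ jy := by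
    rw [inf_sup_left]
    refine sup_le_sup ?_ ?_
    · exact le_trans (inf_le_inf_right x inf_le_left) hmx
    · exact le_trans (inf_le_inf_right y inf_le_right) hm'y
  exact hMdisj _ hmem (hJdown _ (hJsup jx hjx jy hjy) _ hle)

end Sep

section Main
variable {L : Type*} [CoheytingAlgebra L]

/-- If `(b \ a) ⊓ a` lies in a prime filter `p`, there is a strictly smaller
prime filter containing `b`. -/
theorem step_lemma (b a : L) (p : Set L) (hp : IsPrimeFilter p)
    (hmem : (b \ a) ⊓ a ∈ p) : ∃ q : Set L, IsPrimeFilter q ∧ q ⊂ p ∧ b ∈ q := by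
  obtain ⟨hup, hinf, htop, hbot, hprime⟩ := hp
  have ha : a ∈ p := hup _ hmem a inf_le_right
  have hba : b \ a ∈ p := hup _ hmem _ inf_le_left
  set J : Set L := {x | ∃ i, i ∉ p ∧ x ≤ i ⊔ a} with hJ
  have hsep := prime_filter_sep (L := L) {x | b ≤ x} J
    (fun x hx y hxy => le_trans hx hxy)
    (fun x hx y hy => le_inf hx hy) le_top
    (fun x hx y hyx => hx.imp fun i hi => ⟨hi.1, hyx.trans hi.2⟩)
    ?_ ⟨⊥, hbot, by simp⟩ ?_
  · obtain ⟨G, hG, hbG, hGJ⟩ := hsep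
    refine ⟨G, hG, ?_, hbG le_rfl⟩
    have hsub : G ⊆ p := by
      intro x hx
      by_contra hxp
      exact hGJ x hx ⟨x, hxp, le_sup_left⟩
    refine ⟨hsub, fun hps => ?_⟩
    exact hGJ a (hps ha) ⟨⊥, hbot, by simp⟩
  · rintro x ⟨i, hi, hxi⟩ y ⟨i', hi', hyi'⟩
    refine ⟨i ⊔ i', fun h => ?_, ?_⟩
    · rcases hprime _ _ h with h' | h' <;> [exact hi h'; exact hi' h']
    · calc x ⊔ y ≤ (i ⊔ a) ⊔ (i' ⊔ a) := sup_le_sup hxi hyi'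
        _ = i ⊔ i' ⊔ a := by rw [sup_sup_sup_comm, sup_idem]
  · rintro x hx ⟨i, hi, hxi⟩
    have : b ≤ a ⊔ i := (le_trans hx hxi).trans (by rw [sup_comm])
    exact hi (hup _ hba i (sdiff_le_iff.2 this))

/-- Every prime filter containing `Pterm k a` admits a descending chain of
`k+1` prime filters starting at it. -/
theorem codim_lemma : ∀ (k : ℕ) (a : Fin k → L) (p : Set L), IsPrimeFilter p →
    Pterm k a ∈ p →
    ∃ q : Fin (k + 1) → Set L, (∀ i, IsPrimeFilter (q i)) ∧
      (∀ i j : Fin (k + 1), i < j → q j ⊂ q i) ∧ q 0 = p := by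
  intro k
  induction k with
  | zero =>
    intro a p hp _
    exact ⟨fun _ => p, fun _ => hp, fun i j hij => absurd (Fin.le_of_lt hij)
      (by omega), rfl⟩
  | succ k ih =>
    intro a p hp hmem
    obtain ⟨q', hq', hq'p, hPq'⟩ := step_lemma _ _ p hp hmem
    obtain ⟨Q, hQ, hQchain, hQ0⟩ := ih (fun i => a i.castSucc) q' hq' hPq'
    refine ⟨Fin.cases p Q, fun i => ?_, fun i j hij => ?_, Fin.cases_zero ..⟩
    · rcases i with ⟨iv, hi⟩
      cases iv with
      | zero => exact hp
      | succ n => exact hQ ⟨n, by omega⟩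
    · rcases i with ⟨iv, hi⟩; rcases j with ⟨jv, hj⟩
      have hij' : iv < jv := hij
      cases jv with
      | zero => omega
      | succ n =>
        cases iv with
        | zero =>
          show Q ⟨n, by omega⟩ ⊂ p
          rcases Nat.eq_zero_or_pos n with h0 | h0
          · subst h0
            have : (⟨0, by omega⟩ : Fin (k + 1)) = 0 := rfl
            rw [this, hQ0]; exact hq'p
          · refine (hQchain 0 ⟨n, by omega⟩ ?_).trans (hQ0 ▸ hq'p)
            exact h0
        | succ m =>
          show Q ⟨n, by omega⟩ ⊂ Q ⟨m, by omega⟩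
          exact hQchain ⟨m, by omega⟩ ⟨n, by omega⟩ (by simpa using by omega)

end Main


theorem stmt10 {L : Type*} [CoheytingAlgebra L] (d : ℕ) :
    (∀ a : Fin (d + 1) → L, Pterm (d + 1) a = ⊥) ↔
      ¬ ∃ q : Fin (d + 2) → Set L,
          (∀ i, IsPrimeFilter (q i)) ∧
          ∀ i j : Fin (d + 2), i < j → q i ⊂ q j := by
  constructor
  · rintro hP ⟨q, hq, hchain⟩
    have hex : ∀ k : Fin (d + 1), ∃ x, x ∈ q k.succ ∧ x ∉ q k.castSucc := fun k => by
      obtain ⟨x, hx1, hx2⟩ :=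
        Set.exists_of_ssubset (hchain k.castSucc k.succ Fin.castSucc_lt_succ)
      exact ⟨x, hx1, hx2⟩
    choose a ha1 ha2 using hex
    have key : ∀ k (hk : k ≤ d + 1),
        Pterm k (fun i => a (Fin.castLE hk i)) ∈ q ⟨k, by omega⟩ := by
      intro k
      induction k with
      | zero => intro hk; exact (hq _).2.2.1
      | succ k ihk =>
        intro hk
        have hk' : k ≤ d + 1 := by omega
        set m : Fin (d + 1) := ⟨k, by omega⟩ with hm
        show (Pterm k (fun i => a (Fin.castLE hk i.castSucc)) \ a (Fin.castLE hk (Fin.last k)))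
            ⊓ a (Fin.castLE hk (Fin.last k)) ∈ q ⟨k + 1, by omega⟩
        have hfe : (fun i : Fin k => a (Fin.castLE hk i.castSucc)) =
            fun i => a (Fin.castLE hk' i) := funext fun i => congrArg a (Fin.ext rfl)
        have hfl : Fin.castLE hk (Fin.last k) = m := Fin.ext rfl
        rw [hfe, hfl]
        have hP' := ihk hk'
        set P := Pterm k (fun i => a (Fin.castLE hk' i)) with hPdef
        have hcs : m.castSucc = (⟨k, by omega⟩ : Fin (d + 2)) := Fin.ext rfl
        have hss : m.succ = (⟨k + 1, by omega⟩ : Fin (d + 2)) := Fin.ext rfl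
        have hA1 : a m ∈ q ⟨k + 1, by omega⟩ := hss ▸ ha1 m
        have hA2 : a m ∉ q ⟨k, by omega⟩ := fun h => ha2 m (hcs ▸ h)
        have hsub : q ⟨k, by omega⟩ ⊆ q ⟨k + 1, by omega⟩ :=
          (hchain ⟨k, by omega⟩ ⟨k + 1, by omega⟩ (by simp)).1
        have hmem : a m ⊔ P \ a m ∈ q ⟨k, by omega⟩ :=
          (hq _).1 _ hP' _ le_sup_sdiff
        rcases (hq _).2.2.2.2 _ _ hmem with h | h
        · exact absurd h hA2
        · exact (hq _).2.1 _ (hsub h) _ hA1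
    have hfin := key (d + 1) le_rfl
    have hae : (fun i => a (Fin.castLE le_rfl i)) = a := funext fun i => congrArg a (Fin.ext rfl)
    rw [hae, hP a] at hfin
    exact (hq _).2.2.2.1 hfin
  · intro hno a
    by_contra hne
    obtain ⟨p, hp, hFp, _⟩ := prime_filter_sep (L := L)
      {x | Pterm (d + 1) a ≤ x} {x | x = ⊥}
      (fun x hx y hxy => le_trans hx hxy) (fun x hx y hy => le_inf hx hy) le_top
      (fun x hx y hyx => le_bot_iff.1 (hx ▸ hyx)) (fun x hx y hy => show x ⊔ y = ⊥ by rw [show x = ⊥ from hx, show y = ⊥ from hy, sup_idem])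
      rfl (fun x hx h => hne (le_bot_iff.1 (h ▸ hx)))
    obtain ⟨Q, hQ, hQchain, _⟩ := codim_lemma (d + 1) a p hp (hFp le_rfl)
    exact hno ⟨fun i => Q i.rev, fun i => hQ _,
      fun i j hij => hQchain j.rev i.rev (Fin.rev_lt_rev.2 hij)⟩
end

section
/- Let L be a Hausdorff co-Heyting algebra, φ : L → L' a surjective homomorphism of co-Heyting algebras, and I = φ⁻¹({⊥}) its kernel. Then L' is Hausdorff if and only if I is closed for the codimetric topology, i.e. if and only if every a ∈ L such that for each natural number d there exists b ∈ I with a Δ b ∈ dL, itself belongs to I. -/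
/-- A co-Heyting algebra is Hausdorff (for the codimetric topology) iff
`⊥` is the only element of infinite codimension, i.e. `⋂_d dL = {⊥}`. -/
def CHAHausdorff (L : Type*) [CoheytingAlgebra L] : Prop :=
  ∀ a : L, (∀ d : ℕ, CodimGE a d) → a = ⊥

/-- A co-Heyting algebra is precompact iff for every `d` the equivalence
relation `a ≡_d b ⇔ a Δ b ∈ dL` has finitely many classes, i.e. admits a
finite set of representatives. -/
def CHAPrecompact (L : Type*) [CoheytingAlgebra L] : Prop :=
  ∀ d : ℕ, ∃ F : Finset L, ∀ a : L, ∃ b ∈ F, CodimGE (symmDiff a b) d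

section Sep
variable {L : Type*} [DistribLattice L] [BoundedOrder L]

/-- Prime filter separation theorem (Birkhoff–Stone). -/
lemma exists_primeFilter_sep (a : L) (J : Set L)
    (hJdown : ∀ y ∈ J, ∀ x : L, x ≤ y → x ∈ J)
    (hJsup : ∀ x ∈ J, ∀ y ∈ J, x ⊔ y ∈ J)
    (hbot : (⊥ : L) ∈ J) (ha : a ∉ J) :
    ∃ p : Set L, IsPrimeFilter p ∧ a ∈ p ∧ ∀ y ∈ J, y ∉ p := by
  classical
  set S : Set (Set L) :=
    {F | a ∈ F ∧ (∀ x ∈ F, ∀ y : L, x ≤ y → y ∈ F) ∧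
      (∀ x ∈ F, ∀ y ∈ F, x ⊓ y ∈ F) ∧ ∀ y ∈ J, y ∉ F} with hS
  have hup : Set.Ici a ∈ S := by
    refine ⟨le_refl a, fun x hx y hxy => le_trans hx hxy,
      fun x hx y hy => le_inf hx hy, fun y hy hay => ha (hJdown y hy a hay)⟩
  obtain ⟨M, -, hM⟩ := zorn_subset_nonempty S
    (fun c hcS hchain hcne => by
      refine ⟨⋃₀ c, ?_, fun s hs => Set.subset_sUnion_of_mem hs⟩
      obtain ⟨F0, hF0⟩ := hcne
      refine ⟨Set.mem_sUnion.2 ⟨F0, hF0, (hcS hF0).1⟩, ?_, ?_, ?_⟩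
      · rintro x ⟨F, hF, hxF⟩ y hxy
        exact ⟨F, hF, (hcS hF).2.1 x hxF y hxy⟩
      · rintro x ⟨F, hF, hxF⟩ y ⟨G, hG, hyG⟩
        rcases hchain.total hF hG with h | h
        · exact ⟨G, hG, (hcS hG).2.2.1 x (h hxF) y hyG⟩
        · exact ⟨F, hF, (hcS hF).2.2.1 x hxF y (h hyG)⟩
      · rintro y hy ⟨F, hF, hyF⟩
        exact (hcS hF).2.2.2 y hy hyF)
    (Set.Ici a) hup
  obtain ⟨haM, hMup, hMinf, hMJ⟩ := hM.prop
  have htopM : (⊤ : L) ∈ M := hMup a haM ⊤ le_top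
  refine ⟨M, ⟨hMup, hMinf, htopM, fun h => hMJ ⊥ hbot h, ?_⟩, haM, hMJ⟩
  -- primality via maximality
  intro x y hxy
  by_contra hcon
  push_neg at hcon
  obtain ⟨hx, hy⟩ := hcon
  have key : ∀ z : L, z ∉ M → ∃ m ∈ M, ∃ j ∈ J, m ⊓ z ≤ j := by
    intro z hz
    by_contra hno
    push_neg at hno
    have hFz : {t | ∃ m ∈ M, m ⊓ z ≤ t} ∈ S := by
      refine ⟨⟨a, haM, inf_le_left.trans le_rfl⟩, ?_, ?_, ?_⟩
      · rintro t ⟨m, hm, hmt⟩ u htu; exact ⟨m, hm, hmt.trans htu⟩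
      · rintro t ⟨m, hm, hmt⟩ u ⟨m', hm', hmu⟩
        refine ⟨m ⊓ m', hMinf m hm m' hm', le_inf ?_ ?_⟩
        · exact le_trans (inf_le_inf_right z inf_le_left) hmt
        · exact le_trans (inf_le_inf_right z inf_le_right) hmu
      · rintro j hj ⟨m, hm, hmj⟩
        exact hno m hm j hj hmj
    have hsub : M ⊆ {t | ∃ m ∈ M, m ⊓ z ≤ t} := fun m hm => ⟨m, hm, inf_le_left⟩
    have heq := hM.eq_of_subset hFz hsub
    exact hz (heq ▸ ⟨⊤, htopM, by simpa using le_rfl⟩)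
  obtain ⟨m1, hm1, j1, hj1, hle1⟩ := key x hx
  obtain ⟨m2, hm2, j2, hj2, hle2⟩ := key y hy
  have hmM : m1 ⊓ m2 ⊓ (x ⊔ y) ∈ M := hMinf _ (hMinf _ hm1 _ hm2) _ hxy
  have hcalc : m1 ⊓ m2 ⊓ (x ⊔ y) ≤ j1 ⊔ j2 := by
    rw [inf_sup_left]
    refine sup_le_sup ?_ ?_
    · exact le_trans (inf_le_inf_right x inf_le_left) hle1
    · exact le_trans (inf_le_inf_right y inf_le_right) hle2
  exact hMJ _ (hJdown _ (hJsup _ hj1 _ hj2) _ hcalc) hmM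

end Sep

section CHA
variable {L L' : Type*} [CoheytingAlgebra L] [CoheytingAlgebra L']

lemma codimGE_of_le {x y : L} {d : ℕ} (hxy : x ≤ y) (h : CodimGE y d) : CodimGE x d :=
  fun p hp hxp => h p hp (hp.1 x hxp y hxy)

lemma codimGE_bot (d : ℕ) : CodimGE (⊥ : L) d :=
  fun p hp hbp => absurd hbp hp.2.2.2.1

lemma codimGE_zero (a : L) : CodimGE a 0 := by
  intro p hp _
  refine ⟨fun _ => p, fun _ => hp, ?_, rfl⟩
  intro i j hij
  have h1 := i.isLt
  have h2 := j.isLt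
  have h3 := Fin.lt_def.1 hij
  omega

/-- Boundary step: if a prime filter `q` contains `z` and `x \ z`, there is a strictly
smaller prime filter containing `x`. -/
lemma primeFilter_step {q : Set L} (hq : IsPrimeFilter q) {x z : L}
    (hz : z ∈ q) (hxz : x \ z ∈ q) :
    ∃ q' : Set L, IsPrimeFilter q' ∧ q' ⊂ q ∧ x ∈ q' := by
  set J : Set L := {y | ∃ s, s ∉ q ∧ y ≤ s ⊔ z} with hJ
  have hJdown : ∀ y ∈ J, ∀ w : L, w ≤ y → w ∈ J := by
    rintro y ⟨s, hs, hys⟩ w hwy; exact ⟨s, hs, hwy.trans hys⟩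
  have hJsup : ∀ u ∈ J, ∀ v ∈ J, u ⊔ v ∈ J := by
    rintro u ⟨s, hs, hus⟩ v ⟨t, ht, hvt⟩
    refine ⟨s ⊔ t, fun hst => ?_, ?_⟩
    · rcases hq.2.2.2.2 s t hst with h | h
      exacts [hs h, ht h]
    · calc u ⊔ v ≤ (s ⊔ z) ⊔ (t ⊔ z) := sup_le_sup hus hvt
        _ = (s ⊔ t) ⊔ z := by rw [sup_sup_sup_comm, sup_idem]
  have hbotJ : (⊥ : L) ∈ J := ⟨⊥, hq.2.2.2.1, bot_le⟩
  have hxJ : x ∉ J := by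
    rintro ⟨s, hs, hxs⟩
    exact hs (hq.1 _ hxz s (sdiff_le_iff'.2 hxs))
  obtain ⟨p, hp, hxp, hpJ⟩ := exists_primeFilter_sep x J hJdown hJsup hbotJ hxJ
  have hzJ : z ∈ J := ⟨⊥, hq.2.2.2.1, le_sup_right⟩
  have hsub : p ⊆ q := by
    intro y hyp
    by_contra hyq
    exact hpJ y ⟨y, hyq, le_sup_left⟩ hyp
  exact ⟨p, hp, ⟨hsub, fun h => hpJ z hzJ (h hz)⟩, hxp⟩

/-- From a strictly decreasing chain of prime filters of length `d` below `P 0`,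
some element of `P 0` has codimension `≥ d`. -/
lemma chain_elem : ∀ (d : ℕ) (P : Fin (d + 1) → Set L),
    (∀ i, IsPrimeFilter (P i)) → (∀ i j, i < j → P j ⊂ P i) →
    ∃ y ∈ P 0, CodimGE y d := by
  intro d
  induction d with
  | zero => exact fun P hP _ => ⟨⊤, (hP 0).2.2.1, codimGE_zero ⊤⟩
  | succ d ih =>
    intro P hP hPc
    obtain ⟨y', hy', hcy'⟩ := ih (fun i => P i.succ) (fun i => hP i.succ)
      (fun i j hij => hPc i.succ j.succ (by simpa using hij))
    have h01 : P 1 ⊂ P 0 := hPc 0 1 (by simp [Fin.lt_def])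
    obtain ⟨z, hz0, hz1⟩ := Set.exists_of_ssubset h01
    have hy'1 : y' ∈ P 1 := by rw [← Fin.succ_zero_eq_one]; exact hy'
    have hyz1 : y' \ z ∈ P 1 := by
      rcases (hP 1).2.2.2.2 z (y' \ z) ((hP 1).1 y' hy'1 _ le_sup_sdiff) with h | h
      · exact absurd h hz1
      · exact h
    refine ⟨z ⊓ (y' \ z), (hP 0).2.1 z hz0 _ ((h01.1) hyz1), ?_⟩
    intro r hr hyr
    have hzr : z ∈ r := hr.1 _ hyr z inf_le_left
    have hyzr : y' \ z ∈ r := hr.1 _ hyr _ inf_le_right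
    obtain ⟨q', hq', hq'r, hy'q'⟩ := primeFilter_step hr hzr hyzr
    obtain ⟨s, hs, hsc, hs0⟩ := hcy' q' hq' hy'q'
    refine ⟨fun i => if h : (i : ℕ) = 0 then r else s ⟨(i : ℕ) - 1, by omega⟩, ?_, ?_, by simp⟩
    · intro i
      by_cases h : (i : ℕ) = 0
      · simpa only [dif_pos h] using hr
      · simpa only [dif_neg h] using hs _
    · intro i j hij
      have hij' : (i : ℕ) < (j : ℕ) := hij
      have hj0 : ¬ (j : ℕ) = 0 := by omega
      have hsub0 : ∀ k : Fin (d + 1), s k ⊆ q' := by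
        intro k
        rcases eq_or_lt_of_le (Fin.zero_le k) with h | h
        · rw [← h, hs0]
        · rw [← hs0]
          exact (hsc 0 k h).1
      by_cases h : (i : ℕ) = 0
      · simp only [dif_pos h, dif_neg hj0]
        refine ((hsub0 _).trans hq'r.1).ssubset_of_ne (fun he => ?_)
        exact hq'r.2 (he ▸ hsub0 ⟨(j : ℕ) - 1, by omega⟩) |>.elim
      · simp only [dif_neg h, dif_neg hj0]
        exact hsc _ _ (by rw [Fin.lt_def]; simp only []; omega)

variable (φ : CoheytingHom L L')

lemma preimage_primeFilter (hφ : Function.Surjective φ) {q : Set L'}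
    (hq : IsPrimeFilter q) : IsPrimeFilter (φ ⁻¹' q) := by
  obtain ⟨hup, hinf, htop, hbot, hprime⟩ := hq
  refine ⟨?_, ?_, ?_, ?_, ?_⟩
  · intro x hx y hxy
    exact hup _ hx _ (OrderHomClass.mono φ hxy)
  · intro x hx y hy
    simpa only [Set.mem_preimage, map_inf] using hinf _ hx _ hy
  · simpa only [Set.mem_preimage, map_top] using htop
  · simpa only [Set.mem_preimage, map_bot] using hbot
  · intro x y hxy
    exact hprime _ _ (by rw [← map_sup]; exact hxy)

lemma image_primeFilter (hφ : Function.Surjective φ) {p : Set L}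
    (hp : IsPrimeFilter p) (hd : ∀ x ∈ p, φ x ≠ ⊥) : IsPrimeFilter (φ '' p) := by
  obtain ⟨hup, hinf, htop, hbot, hprime⟩ := hp
  refine ⟨?_, ?_, ⟨⊤, htop, map_top φ⟩, ?_, ?_⟩
  · rintro x' ⟨x, hx, rfl⟩ y' hxy
    obtain ⟨u, rfl⟩ := hφ y'
    exact ⟨x ⊔ u, hup _ hx _ le_sup_left, by rw [map_sup]; exact sup_eq_right.2 hxy⟩
  · rintro x' ⟨x, hx, rfl⟩ y' ⟨y, hy, rfl⟩
    exact ⟨x ⊓ y, hinf _ hx _ hy, map_inf φ x y⟩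
  · rintro ⟨x, hx, hx0⟩
    exact hd x hx hx0
  · rintro x' y' ⟨x, hx, hxe⟩
    obtain ⟨u, rfl⟩ := hφ x'
    obtain ⟨v, rfl⟩ := hφ y'
    have hxuv : x \ (u ⊔ v) ∈ {b | φ b = ⊥} := by
      simp only [Set.mem_setOf_eq, map_sdiff, map_sup, hxe, sdiff_self]
    have hx' : u ⊔ v ⊔ x \ (u ⊔ v) ∈ p := hup _ hx _ le_sup_sdiff
    rcases hprime _ _ hx' with h | h
    · rcases hprime _ _ h with h' | h'
      · exact Or.inl ⟨u, h', rfl⟩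
      · exact Or.inr ⟨v, h', rfl⟩
    · exact absurd (hd _ h) (not_not.2 hxuv)

lemma codim_push (hφ : Function.Surjective φ) {c : L} {d : ℕ}
    (hc : CodimGE c d) : CodimGE (φ c) d := by
  intro q' hq' hmem
  have hp : IsPrimeFilter (φ ⁻¹' q') := preimage_primeFilter φ hφ hq'
  obtain ⟨P, hP, hPc, hP0⟩ := hc (φ ⁻¹' q') hp hmem
  have hPsub : ∀ i, P i ⊆ φ ⁻¹' q' := by
    intro i
    rcases eq_or_lt_of_le (Fin.zero_le i) with h | h
    · rw [← h, hP0]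
    · rw [← hP0]; exact (hPc 0 i h).1
  have hdisj : ∀ i, ∀ x ∈ P i, φ x ≠ ⊥ := by
    intro i x hx h0
    exact hq'.2.2.2.1 (h0 ▸ hPsub i hx)
  refine ⟨fun i => φ '' P i, fun i => image_primeFilter φ hφ (hP i) (hdisj i), ?_, ?_⟩
  · intro i j hij
    refine ⟨Set.image_mono (f := φ) (hPc i j hij).1, fun hsub => ?_⟩
    obtain ⟨x, hxi, hxj⟩ := Set.exists_of_ssubset (hPc i j hij)
    obtain ⟨z, hz, hze⟩ := hsub ⟨x, hxi, rfl⟩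
    have : z ⊔ x \ z ∈ P j := (hP j).1 _ hz _ le_sup_left
    have h2 : x ⊔ z \ x ∈ P j := (hP j).1 _ hz _ le_sup_sdiff
    rcases (hP j).2.2.2.2 _ _ h2 with h | h
    · exact hxj h
    · exact hdisj j _ h (by rw [map_sdiff, hze, sdiff_self])
  · show φ '' P 0 = q'
    rw [hP0, Set.image_preimage_eq q' hφ]

end CHA


theorem stmt11 {L L' : Type*} [CoheytingAlgebra L] [CoheytingAlgebra L']
    (hL : CHAHausdorff L)
    (φ : CoheytingHom L L') (hφ : Function.Surjective φ) :
    CHAHausdorff L' ↔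
      ∀ a : L, (∀ d : ℕ, ∃ b : L, φ b = ⊥ ∧ CodimGE (symmDiff a b) d) → φ a = ⊥ := by
  constructor
  · -- L' Hausdorff → kernel closed
    intro hH' a ha
    apply hH'
    intro d
    obtain ⟨b, hb, hc⟩ := ha d
    have he : φ (symmDiff a b) = φ a := by
      rw [map_symmDiff, hb, symmDiff_bot]
    exact he ▸ codim_push φ hφ hc
  · -- kernel closed → L' Hausdorff
    intro hcl a' ha'
    obtain ⟨a, rfl⟩ := hφ a'
    apply hcl
    intro d
    by_cases haJ : ∃ b c : L, φ b = ⊥ ∧ CodimGE c d ∧ a ≤ b ⊔ c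
    · obtain ⟨b, c, hb, hc, hle⟩ := haJ
      refine ⟨b ⊓ a, by rw [map_inf, hb, bot_inf_eq], ?_⟩
      have h1 : symmDiff a (b ⊓ a) = a \ b := by
        rw [symmDiff_def, sdiff_eq_bot_iff.mpr (inf_le_right : b ⊓ a ≤ a), sup_bot_eq, sdiff_inf,
          sdiff_self, sup_bot_eq]
      rw [h1]
      exact codimGE_of_le (sdiff_le_iff.2 hle) hc
    · exfalso
      push_neg at haJ
      set J : Set L := {y | ∃ b c : L, φ b = ⊥ ∧ CodimGE c d ∧ y ≤ b ⊔ c} with hJdef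
      have hJdown : ∀ y ∈ J, ∀ x : L, x ≤ y → x ∈ J := by
        rintro y ⟨b, c, hb, hc, hy⟩ x hxy
        exact ⟨b, c, hb, hc, hxy.trans hy⟩
      have hJsup : ∀ x ∈ J, ∀ y ∈ J, x ⊔ y ∈ J := by
        rintro x ⟨b1, c1, hb1, hc1, hx1⟩ y ⟨b2, c2, hb2, hc2, hy2⟩
        refine ⟨b1 ⊔ b2, c1 ⊔ c2, by rw [map_sup, hb1, hb2, sup_idem], ?_, ?_⟩
        · intro p hp hm
          rcases hp.2.2.2.2 _ _ hm with h | h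
          exacts [hc1 p hp h, hc2 p hp h]
        · calc x ⊔ y ≤ (b1 ⊔ c1) ⊔ (b2 ⊔ c2) := sup_le_sup hx1 hy2
            _ = (b1 ⊔ b2) ⊔ (c1 ⊔ c2) := sup_sup_sup_comm _ _ _ _
      have hbotJ : (⊥ : L) ∈ J := ⟨⊥, ⊥, map_bot φ, codimGE_bot d, bot_le⟩
      have haJ' : a ∉ J := by
        rintro ⟨b, c, hb, hc, hle⟩
        exact haJ b c hb hc hle
      obtain ⟨p, hp, hap, hpJ⟩ := exists_primeFilter_sep a J hJdown hJsup hbotJ haJ'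
      have hdisj : ∀ x ∈ p, φ x ≠ ⊥ := by
        intro x hx h0
        exact hpJ x ⟨x, ⊥, h0, codimGE_bot d, by rw [sup_bot_eq]⟩ hx
      have hq' : IsPrimeFilter (φ '' p) := image_primeFilter φ hφ hp hdisj
      obtain ⟨Q, hQ, hQc, hQ0⟩ := ha' d (φ '' p) hq' ⟨a, hap, rfl⟩
      have hsat : φ ⁻¹' (φ '' p) = p := by
        apply Set.Subset.antisymm
        · intro x hx
          obtain ⟨z, hz, hze⟩ := hx
          have h2 : x ⊔ z \ x ∈ p := hp.1 _ hz _ le_sup_sdiff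
          rcases hp.2.2.2.2 _ _ h2 with h | h
          · exact h
          · exact absurd (by rw [map_sdiff, hze, sdiff_self]) (hdisj _ h)
        · exact Set.subset_preimage_image φ p
      have hP : ∀ i, IsPrimeFilter ((fun i => φ ⁻¹' (Q i)) i) :=
        fun i => preimage_primeFilter φ hφ (hQ i)
      have hPc : ∀ i j, i < j → (fun i => φ ⁻¹' (Q i)) j ⊂ (fun i => φ ⁻¹' (Q i)) i := by
        intro i j hij
        refine ⟨Set.preimage_mono (hQc i j hij).1, fun hsub => ?_⟩
        obtain ⟨x', hxi, hxj⟩ := Set.exists_of_ssubset (hQc i j hij)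
        obtain ⟨x, rfl⟩ := hφ x'
        exact hxj (hsub hxi)
      obtain ⟨y, hy, hcy⟩ := chain_elem d (fun i => φ ⁻¹' (Q i)) hP hPc
      have hy' : y ∈ p := by
        have : (fun i => φ ⁻¹' (Q i)) 0 = p := by
          show φ ⁻¹' (Q 0) = p
          rw [hQ0, hsat]
        exact this ▸ hy
      exact hpJ y ⟨⊥, y, map_bot φ, hcy, by rw [bot_sup_eq]⟩ hy'
end

section
/- Every finitely generated co-Heyting algebra is precompact: if L is a co-Heyting algebra generated by a finite subset S (i.e. the smallest subset of L containing S and closed under ⊥, ⊤, ⊔, ⊓ and \ is L itself), then for every natural number d the equivalence relation a ≡_d b defined by a Δ b ∈ dL has only finitely many equivalence classes. -/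
namespace Stmt12Aux

variable {L : Type*}

/-- A prime filter `p` has depth `≥ n`: there is a strictly decreasing chain of
prime filters of length `n` starting at `p`. -/
def Deep [Lattice L] [BoundedOrder L] (p : Set L) (n : ℕ) : Prop :=
  ∃ q : Fin (n + 1) → Set L, (∀ i, IsPrimeFilter (q i)) ∧
    (∀ i j : Fin (n + 1), i < j → q j ⊂ q i) ∧ q 0 = p

section Basic

variable [Lattice L] [BoundedOrder L]

lemma deep_zero {p : Set L} (hp : IsPrimeFilter p) : Deep p 0 :=
  ⟨fun _ => p, fun _ => hp, fun i j hij => by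
    have hi := i.isLt; have hj := j.isLt
    have := Fin.lt_def.mp hij; omega, rfl⟩

lemma Deep.trunc {p : Set L} {n : ℕ} (h : Deep p (n + 1)) : Deep p n := by
  obtain ⟨c, hc1, hc2, hc3⟩ := h
  refine ⟨fun k => c ⟨k.1, by omega⟩, fun i => hc1 _, fun i j hij => ?_, ?_⟩
  · exact hc2 _ _ (by simp only [Fin.mk_lt_mk]; exact Fin.lt_def.mp hij)
  · simpa using hc3

lemma Deep.of_ssubset {q p : Set L} {n : ℕ} (hp : IsPrimeFilter p) (hqp : q ⊂ p)
    (h : Deep q n) : Deep p (n + 1) := by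
  obtain ⟨c, hc1, hc2, hc3⟩ := h
  refine ⟨fun k => if hk : (k : ℕ) = 0 then p else c ⟨(k : ℕ) - 1, by omega⟩, ?_, ?_, ?_⟩
  · intro i; dsimp only; split
    · exact hp
    · exact hc1 _
  · intro i j hij
    have hij' : (i : ℕ) < (j : ℕ) := Fin.lt_def.mp hij
    dsimp only
    have hj0 : ¬ ((j : ℕ) = 0) := by omega
    rw [dif_neg hj0]
    by_cases hi0 : (i : ℕ) = 0
    · rw [dif_pos hi0]
      have hle : c ⟨(j : ℕ) - 1, by omega⟩ ⊆ q := by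
        by_cases hj1 : (j : ℕ) - 1 = 0
        · have he : (⟨(j : ℕ) - 1, by omega⟩ : Fin (n + 1)) = 0 := by
            apply Fin.ext; simp [hj1]
          rw [he, hc3]
        · have := hc2 0 ⟨(j : ℕ) - 1, by omega⟩ (by simp [Fin.lt_def]; omega)
          rw [hc3] at this; exact this.subset
      exact ssubset_of_subset_of_ssubset hle hqp
    · rw [dif_neg hi0]
      exact hc2 _ _ (by simp [Fin.lt_def]; omega)
  · simp

lemma Deep.of_subset {q p : Set L} {n : ℕ} (hp : IsPrimeFilter p) (hqp : q ⊆ p)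
    (h : Deep q (n + 1)) : Deep p (n + 1) := by
  rcases eq_or_ne q p with rfl | hne
  · exact h
  · exact Deep.of_ssubset hp ⟨hqp, fun hc => hne (subset_antisymm hqp hc)⟩ h.trunc

end Basic

/-- Separation: a prime filter containing `x` and disjoint from the ideal `J`. -/
lemma sep [DistribLattice L] [BoundedOrder L] {x : L} {J : Set L}
    (hJd : ∀ z w : L, z ≤ w → w ∈ J → z ∈ J)
    (hJj : ∀ z ∈ J, ∀ w ∈ J, z ⊔ w ∈ J)
    (hJb : (⊥ : L) ∈ J) (hxJ : x ∉ J) :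
    ∃ P : Set L, IsPrimeFilter P ∧ x ∈ P ∧ ∀ z ∈ P, z ∉ J := by
  classical
  set 𝒮 : Set (Set L) :=
    {G | x ∈ G ∧ (∀ u ∈ G, ∀ v : L, u ≤ v → v ∈ G) ∧
      (∀ u ∈ G, ∀ v ∈ G, u ⊓ v ∈ G) ∧ ∀ z ∈ G, z ∉ J} with h𝒮
  have hx0 : {z : L | x ≤ z} ∈ 𝒮 := by
    refine ⟨le_refl x, fun u hu v huv => le_trans hu huv,
      fun u hu v hv => le_inf hu hv, fun z hz hzJ => hxJ (hJd x z hz hzJ)⟩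
  have hub : ∀ c ⊆ 𝒮, IsChain (· ⊆ ·) c → c.Nonempty →
      ∃ ub ∈ 𝒮, ∀ s ∈ c, s ⊆ ub := by
    intro c hc hchain hne
    refine ⟨⋃₀ c, ⟨?_, ?_, ?_, ?_⟩, fun s hs => Set.subset_sUnion_of_mem hs⟩
    · obtain ⟨G₀, hG₀⟩ := hne; exact ⟨G₀, hG₀, (hc hG₀).1⟩
    · rintro u ⟨G₀, hG₀, hu⟩ v huv; exact ⟨G₀, hG₀, (hc hG₀).2.1 u hu v huv⟩
    · rintro u ⟨G₀, hG₀, hu⟩ v ⟨G₁, hG₁, hv⟩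
      rcases hchain.total hG₀ hG₁ with hsub | hsub
      · exact ⟨G₁, hG₁, (hc hG₁).2.2.1 u (hsub hu) v hv⟩
      · exact ⟨G₀, hG₀, (hc hG₀).2.2.1 u hu v (hsub hv)⟩
    · rintro z ⟨G₀, hG₀, hz⟩; exact (hc hG₀).2.2.2 z hz
  obtain ⟨G, -, hG⟩ := zorn_subset_nonempty 𝒮 hub _ hx0
  obtain ⟨hxG, hGup, hGinf, hGJ⟩ := hG.prop
  have hGtop : (⊤ : L) ∈ G := hGup x hxG ⊤ le_top
  have key : ∀ w : L, w ∉ G → ∃ g ∈ G, ∃ j ∈ J, g ⊓ w ≤ j := by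
    intro w hw
    by_contra hno
    push_neg at hno
    set Gw : Set L := {z | ∃ g ∈ G, g ⊓ w ≤ z} with hGw
    have hGwS : Gw ∈ 𝒮 := by
      refine ⟨⟨x, hxG, inf_le_left⟩, ?_, ?_, ?_⟩
      · rintro u ⟨g, hg, hgu⟩ v huv; exact ⟨g, hg, hgu.trans huv⟩
      · rintro u ⟨g, hg, hgu⟩ v ⟨g', hg', hgv⟩
        refine ⟨g ⊓ g', hGinf g hg g' hg', ?_⟩
        have h1 : g ⊓ g' ⊓ w ≤ u := le_trans (by
          calc g ⊓ g' ⊓ w ≤ g ⊓ w := inf_le_inf_right w inf_le_left) hgu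
        have h2 : g ⊓ g' ⊓ w ≤ v := le_trans (by
          calc g ⊓ g' ⊓ w ≤ g' ⊓ w := inf_le_inf_right w inf_le_right) hgv
        exact le_inf h1 h2
      · rintro z ⟨g, hg, hgz⟩ hzJ
        exact hno g hg z hzJ hgz
    have hsub : G ⊆ Gw := fun g hg => ⟨g, hg, inf_le_left⟩
    have : Gw ⊆ G := hG.2 hGwS hsub
    exact hw (this ⟨⊤, hGtop, by simp⟩)
  refine ⟨G, ⟨hGup, hGinf, hGtop, fun hbG => hGJ ⊥ hbG hJb, ?_⟩, hxG, hGJ⟩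
  intro u v huv
  by_contra hcon
  push_neg at hcon
  obtain ⟨hu, hv⟩ := hcon
  obtain ⟨g, hg, j, hj, hgu⟩ := key u hu
  obtain ⟨g', hg', j', hj', hgv⟩ := key v hv
  have hmem : g ⊓ g' ⊓ (u ⊔ v) ∈ G := hGinf _ (hGinf g hg g' hg') _ huv
  have hle : g ⊓ g' ⊓ (u ⊔ v) ≤ j ⊔ j' := by
    rw [inf_sup_left]
    refine sup_le ?_ ?_
    · exact le_trans (le_trans (inf_le_inf_right u inf_le_left) hgu) le_sup_left
    · exact le_trans (le_trans (inf_le_inf_right v inf_le_right) hgv) le_sup_right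
  exact hGJ _ hmem (hJd _ _ hle (hJj j hj j' hj'))

/-- Co-Esakia lemma: `x \ y ∈ p` iff some prime filter `q ⊆ p` has `x ∈ q`, `y ∉ q`. -/
lemma coesakia [CoheytingAlgebra L] {p : Set L} (hp : IsPrimeFilter p) {x y : L}
    (hm : x \ y ∈ p) :
    ∃ q : Set L, IsPrimeFilter q ∧ q ⊆ p ∧ x ∈ q ∧ y ∉ q := by
  set J : Set L := {z | ∃ w, w ∉ p ∧ z ≤ w ⊔ y} with hJ
  have hJd : ∀ z w : L, z ≤ w → w ∈ J → z ∈ J := by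
    rintro z w hzw ⟨u, hu, hw⟩; exact ⟨u, hu, hzw.trans hw⟩
  have hJj : ∀ z ∈ J, ∀ w ∈ J, z ⊔ w ∈ J := by
    rintro z ⟨u, hu, hz⟩ w ⟨u', hu', hw⟩
    refine ⟨u ⊔ u', ?_, ?_⟩
    · intro hc; rcases hp.2.2.2.2 u u' hc with h | h
      · exact hu h
      · exact hu' h
    · refine sup_le (hz.trans ?_) (hw.trans ?_)
      · exact sup_le_sup_right le_sup_left y
      · exact sup_le_sup_right le_sup_right y
  have hJb : (⊥ : L) ∈ J := ⟨⊥, hp.2.2.2.1, bot_le⟩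
  have hxJ : x ∉ J := by
    rintro ⟨w, hw, hle⟩
    exact hw (hp.1 _ hm w (sdiff_le_iff.mpr (by rwa [sup_comm] at hle)))
  obtain ⟨P, hP, hxP, hPJ⟩ := sep hJd hJj hJb hxJ
  refine ⟨P, hP, ?_, hxP, ?_⟩
  · intro z hz
    by_contra hzp
    exact hPJ z hz ⟨z, hzp, le_sup_left⟩
  · intro hyP
    exact hPJ y hyP ⟨⊥, hp.2.2.2.1, le_sup_right⟩

lemma sdiff_mem_of [Lattice L] [BoundedOrder L] [GeneralizedCoheytingAlgebra L] : True := trivial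

/-- The space of Kripke types of depth `n` over the generators `S`. -/
def Typ (S : Set L) : ℕ → Type _
  | 0 => Set S
  | n + 1 => Set S × Set (Typ S n)

lemma typ_finite (S : Set L) (h : S.Finite) : ∀ n, Finite (Typ S n) := by
  intro n
  induction n with
  | zero =>
    haveI := h.to_subtype
    exact (inferInstance : Finite (Set S))
  | succ m ih =>
    haveI := h.to_subtype
    haveI := ih
    exact (inferInstance : Finite (Set S × Set (Typ S m)))

/-- The depth-`n` type of a prime filter. -/
def typOf [Lattice L] [BoundedOrder L] (S : Set L) : (n : ℕ) → Set L → Typ S n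
  | 0, p => {s : S | (s : L) ∈ p}
  | n + 1, p =>
    ⟨{s : S | (s : L) ∈ p}, {t | ∃ q, IsPrimeFilter q ∧ q ⊂ p ∧ typOf S n q = t}⟩

lemma typOf_trace [Lattice L] [BoundedOrder L] {S : Set L} {n : ℕ} {p p' : Set L}
    (h : typOf S n p = typOf S n p') {s : L} (hs : s ∈ S) : (s ∈ p ↔ s ∈ p') := by
  cases n with
  | zero =>
    have := Set.ext_iff.mp h ⟨s, hs⟩
    simpa [typOf] using this
  | succ m =>
    have h1 : ({s : S | (s : L) ∈ p} : Set S) = {s : S | (s : L) ∈ p'} := by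
      have := congrArg Prod.fst h
      simpa [typOf] using this
    have := Set.ext_iff.mp h1 ⟨s, hs⟩
    simpa using this

lemma typOf_snd [Lattice L] [BoundedOrder L] {S : Set L} {n : ℕ} {p p' : Set L}
    (h : typOf S (n + 1) p = typOf S (n + 1) p') {q : Set L} (hq : IsPrimeFilter q)
    (hqp : q ⊂ p) : ∃ q', IsPrimeFilter q' ∧ q' ⊂ p' ∧ typOf S n q' = typOf S n q := by
  have h2 : ({t | ∃ r, IsPrimeFilter r ∧ r ⊂ p ∧ typOf S n r = t} : Set (Typ S n)) =
      {t | ∃ r, IsPrimeFilter r ∧ r ⊂ p' ∧ typOf S n r = t} := by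
    have := congrArg Prod.snd h
    simpa [typOf] using this
  have hmem : typOf S n q ∈ ({t | ∃ r, IsPrimeFilter r ∧ r ⊂ p ∧ typOf S n r = t} :
      Set (Typ S n)) := ⟨q, hq, hqp, rfl⟩
  rw [h2] at hmem
  exact hmem

/-- Key transfer lemma: membership of any element of `L` in a prime filter of
depth `≤ n` only depends on the depth-`n` type of the filter. -/
lemma transfer [CoheytingAlgebra L] (S : Set L)
    (hgen : ∀ T : Set L, S ⊆ T → (⊥ : L) ∈ T → (⊤ : L) ∈ T →
      (∀ x ∈ T, ∀ y ∈ T, x ⊔ y ∈ T) →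
      (∀ x ∈ T, ∀ y ∈ T, x ⊓ y ∈ T) →
      (∀ x ∈ T, ∀ y ∈ T, x \ y ∈ T) →
      ∀ x : L, x ∈ T) :
    ∀ x : L, ∀ n : ℕ, ∀ p p' : Set L, IsPrimeFilter p → IsPrimeFilter p' →
      ¬ Deep p (n + 1) → ¬ Deep p' (n + 1) → typOf S n p = typOf S n p' →
      x ∈ p → x ∈ p' := by
  set T : Set L := {x | ∀ n : ℕ, ∀ p p' : Set L, IsPrimeFilter p → IsPrimeFilter p' →
      ¬ Deep p (n + 1) → ¬ Deep p' (n + 1) → typOf S n p = typOf S n p' →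
      x ∈ p → x ∈ p'} with hT
  have hS : S ⊆ T := by
    intro s hs n p p' hp hp' _ _ htyp hmem
    exact (typOf_trace htyp hs).mp hmem
  have hbot : (⊥ : L) ∈ T := by
    intro n p p' hp hp' _ _ _ hmem
    exact absurd hmem hp.2.2.2.1
  have htop : (⊤ : L) ∈ T := by
    intro n p p' hp hp' _ _ _ _
    exact hp'.2.2.1
  have hsup : ∀ x ∈ T, ∀ y ∈ T, x ⊔ y ∈ T := by
    intro x hx y hy n p p' hp hp' hdp hdp' htyp hmem
    rcases hp.2.2.2.2 x y hmem with h | h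
    · exact hp'.1 x (hx n p p' hp hp' hdp hdp' htyp h) _ le_sup_left
    · exact hp'.1 y (hy n p p' hp hp' hdp hdp' htyp h) _ le_sup_right
  have hinf : ∀ x ∈ T, ∀ y ∈ T, x ⊓ y ∈ T := by
    intro x hx y hy n p p' hp hp' hdp hdp' htyp hmem
    have hxp : x ∈ p := hp.1 _ hmem x inf_le_left
    have hyp : y ∈ p := hp.1 _ hmem y inf_le_right
    exact hp'.2.1 x (hx n p p' hp hp' hdp hdp' htyp hxp) y
      (hy n p p' hp hp' hdp hdp' htyp hyp)
  have hsdiff : ∀ x ∈ T, ∀ y ∈ T, x \ y ∈ T := by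
    intro x hx y hy n p p' hp hp' hdp hdp' htyp hmem
    obtain ⟨q, hq, hqsub, hxq, hyq⟩ := coesakia hp hmem
    rcases eq_or_ne q p with rfl | hne
    · -- q = p : transfer memberships at the same level
      have hx' : x ∈ p' := hx n q p' hq hp' hdp hdp' htyp hxq
      have hy' : y ∉ p' := fun hyp' => hyq (hy n p' q hp' hq hdp' hdp htyp.symm hyp')
      have hsup' : y ⊔ x \ y ∈ p' := hp'.1 x hx' _ le_sup_sdiff
      rcases hp'.2.2.2.2 y (x \ y) hsup' with h | h
      · exact absurd h hy'
      · exact h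
    · have hss : q ⊂ p := ⟨hqsub, fun hc => hne (subset_antisymm hqsub hc)⟩
      cases n with
      | zero => exact absurd (Deep.of_ssubset hp hss (deep_zero hq)) hdp
      | succ m =>
        obtain ⟨q', hq', hss', htypq⟩ := typOf_snd htyp hq hss
        have hsq : ¬ Deep q (m + 1) := fun hd => hdp (Deep.of_ssubset hp hss hd)
        have hsq' : ¬ Deep q' (m + 1) := fun hd => hdp' (Deep.of_ssubset hp' hss' hd)
        have hxq' : x ∈ q' := hx m q q' hq hq' hsq hsq' htypq.symm hxq
        have hyq' : y ∉ q' := fun hyy => hyq (hy m q' q hq' hq hsq' hsq htypq hyy)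
        have hsup' : y ⊔ x \ y ∈ q' := hq'.1 x hxq' _ le_sup_sdiff
        rcases hq'.2.2.2.2 y (x \ y) hsup' with h | h
        · exact absurd h hyq'
        · exact hss'.subset h
  exact fun x => hgen T hS hbot htop hsup hinf hsdiff x

end Stmt12Aux

theorem stmt12 {L : Type*} [CoheytingAlgebra L] (S : Set L) (hfin : S.Finite)
    (hgen : ∀ T : Set L, S ⊆ T → (⊥ : L) ∈ T → (⊤ : L) ∈ T →
      (∀ x ∈ T, ∀ y ∈ T, x ⊔ y ∈ T) →
      (∀ x ∈ T, ∀ y ∈ T, x ⊓ y ∈ T) →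
      (∀ x ∈ T, ∀ y ∈ T, x \ y ∈ T) →
      ∀ x : L, x ∈ T)
    (d : ℕ) :
    ∃ F : Finset L, ∀ a : L, ∃ b ∈ F, CodimGE (symmDiff a b) d := by
  classical
  open Stmt12Aux in
  match d with
  | 0 =>
    refine ⟨{⊥}, fun a => ⟨⊥, Finset.mem_singleton_self _, ?_⟩⟩
    intro p hp _
    exact ⟨fun _ => p, fun _ => hp, fun i j hij => by
      have hi := i.isLt; have hj := j.isLt
      have := Fin.lt_def.mp hij; omega, rfl⟩
  | n + 1 =>
    haveI : Finite (Stmt12Aux.Typ S n) := Stmt12Aux.typ_finite S hfin n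
    set Φ : L → Set (Stmt12Aux.Typ S n) := fun a =>
      {t | ∃ p : Set L, IsPrimeFilter p ∧ ¬ Stmt12Aux.Deep p (n + 1) ∧ a ∈ p ∧
        Stmt12Aux.typOf S n p = t} with hΦ
    have hrange : (Set.range Φ).Finite := Set.toFinite _
    refine ⟨hrange.toFinset.image (Function.invFun Φ), fun a => ?_⟩
    set b : L := Function.invFun Φ (Φ a) with hb
    have hΦb : Φ b = Φ a := Function.invFun_eq ⟨a, rfl⟩
    refine ⟨b, Finset.mem_image_of_mem _ (hrange.mem_toFinset.mpr ⟨a, rfl⟩), ?_⟩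
    -- agreement on shallow prime filters
    have agree : ∀ p : Set L, IsPrimeFilter p → ¬ Stmt12Aux.Deep p (n + 1) →
        (a ∈ p ↔ b ∈ p) := by
      intro p hp hdp
      constructor
      · intro ha
        have : Stmt12Aux.typOf S n p ∈ Φ a := ⟨p, hp, hdp, ha, rfl⟩
        rw [← hΦb] at this
        obtain ⟨p₂, hp₂, hd₂, hb₂, htyp⟩ := this
        exact Stmt12Aux.transfer S hgen b n p₂ p hp₂ hp hd₂ hdp htyp hb₂
      · intro hbp
        have : Stmt12Aux.typOf S n p ∈ Φ b := ⟨p, hp, hdp, hbp, rfl⟩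
        rw [hΦb] at this
        obtain ⟨p₂, hp₂, hd₂, ha₂, htyp⟩ := this
        exact Stmt12Aux.transfer S hgen a n p₂ p hp₂ hp hd₂ hdp htyp ha₂
    intro p hp hmem
    by_contra hnd
    have hnd' : ¬ Stmt12Aux.Deep p (n + 1) := hnd
    rw [symmDiff_def] at hmem
    have hshallow : ∀ q : Set L, q ⊆ p → ¬ Stmt12Aux.Deep q (n + 1) :=
      fun q hq hd => hnd' (Stmt12Aux.Deep.of_subset hp hq hd)
    rcases hp.2.2.2.2 _ _ hmem with h | h
    · obtain ⟨q, hq, hqsub, haq, hbq⟩ := Stmt12Aux.coesakia hp h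
      exact hbq ((agree q hq (hshallow q hqsub)).mp haq)
    · obtain ⟨q, hq, hqsub, hbq, haq⟩ := Stmt12Aux.coesakia hp h
      exact haq ((agree q hq (hshallow q hqsub)).mpr hbq)
end

section
/- Let L be a precompact Hausdorff co-Heyting algebra. Then the set of join irreducible elements of L satisfies the ascending chain condition: there is no sequence (x_n)_{n∈ℕ} of join irreducible elements of L with x_n < x_{n+1} for all n. -/
/-- `x` is join irreducible: nonzero, and `x ≤ a ⊔ b` implies `x ≤ a` or `x ≤ b`. -/
def JoinIrred {L : Type*} [Lattice L] [BoundedOrder L] (x : L) : Prop :=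
  x ≠ ⊥ ∧ ∀ a b : L, x ≤ a ⊔ b → x ≤ a ∨ x ≤ b

lemma codim_anti {L : Type*} [Lattice L] [BoundedOrder L] {a b : L} (h : a ≤ b) {d : ℕ}
    (hb : CodimGE b d) : CodimGE a d := fun p hp ha =>
  hb p hp (hp.1 a ha b h)

lemma codim_sup {L : Type*} [Lattice L] [BoundedOrder L] {a b : L} {d : ℕ}
    (ha : CodimGE a d) (hb : CodimGE b d) : CodimGE (a ⊔ b) d := fun p hp hab => by
  rcases hp.2.2.2.2 a b hab with h | h
  · exact ha p hp h
  · exact hb p hp h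

lemma key_step_s16 {L : Type*} [CoheytingAlgebra L] {d : ℕ} {u v b : L}
    (huv : u < v) (hv : JoinIrred v)
    (h1 : CodimGE (symmDiff u b) d) (h2 : CodimGE (symmDiff v b) d) :
    CodimGE v d := by
  have hvle : v ≤ symmDiff u v := by
    rcases hv.2 u (v \ u) le_sup_sdiff with h | h
    · exact absurd h (not_le_of_gt huv)
    · exact h.trans (by rw [symmDiff_def]; exact le_sup_right)
  have htri : symmDiff u v ≤ symmDiff u b ⊔ symmDiff v b := by
    calc symmDiff u v ≤ symmDiff u b ⊔ symmDiff b v := symmDiff_triangle u b v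
    _ = symmDiff u b ⊔ symmDiff v b := by rw [symmDiff_comm b v]
  exact codim_anti (hvle.trans htri) (codim_sup h1 h2)

theorem stmt16 {L : Type*} [CoheytingAlgebra L]
    (hpc : CHAPrecompact L) (hh : CHAHausdorff L) :
    ¬ ∃ x : ℕ → L, (∀ n, JoinIrred (x n)) ∧ ∀ n, x n < x (n + 1) := by
  rintro ⟨x, hji, hlt⟩
  have hmono : StrictMono x := strictMono_nat_of_lt_succ hlt
  have key : ∀ d : ℕ, CodimGE (x 0) d := by
    intro d
    obtain ⟨F, hF⟩ := hpc d
    choose f hfF hfc using fun n => hF (x n)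
    obtain ⟨m, n, hmn, hfeq⟩ := Finite.exists_ne_map_eq_of_infinite
      (fun n => (⟨f n, hfF n⟩ : F))
    have hfeq' : f m = f n := congrArg Subtype.val hfeq
    rcases hmn.lt_or_gt with h | h
    · have := key_step_s16 (hmono h) (hji n) (hfeq' ▸ hfc m) (hfc n)
      exact codim_anti (hmono.monotone (Nat.zero_le n)) this
    · have := key_step_s16 (hmono h) (hji m) (hfeq' ▸ hfc n) (hfc m)
      exact codim_anti (hmono.monotone (Nat.zero_le m)) this
  exact (hji 0).1 (hh (x 0) key)
end
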